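/- arXiv:2406.00728 — 6 statements merged into one kernel-verified Lean document; each statement's English description precedes it below -/
import Mathlib

section
/- Let T : K → L(E) be a pseudorepresentation of K on E which is an almost σ-representation, i.e. its σ-bound b(T) is finite and its σ-defect satisfies r(T) ≤ min{1/4, 1/(9·b(T)²)}. Then for every g ∈ K the operator T(g) is invertible in L(E), and ‖T(g)⁻¹‖ ≤ b(T)/(1 − r(T)). (Group case of the paper's Lemma on invertibility of almost σ-representations.) -/
section Aux
variable {A E : Type*} [NormedRing A]
    [NormedAddCommGroup E] [NormedSpace ℝ E]
    [Module A E] [SMulCommClass ℝ A E]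

noncomputable def smulOp (hAE : ∀ (a : A) (e : E), ‖a • e‖ ≤ ‖a‖ * ‖e‖) (a : A) :
    E →L[ℝ] E :=
  LinearMap.mkContinuous
    { toFun := fun e => a • e
      map_add' := fun x y => smul_add a x y
      map_smul' := fun r x => (smul_comm r a x).symm } ‖a‖ (hAE a)

lemma smulOp_mul (hAE : ∀ (a : A) (e : E), ‖a • e‖ ≤ ‖a‖ * ‖e‖) (a b : A) :
    smulOp hAE a * smulOp hAE b = smulOp hAE (a * b) :=
  ContinuousLinearMap.ext fun e => (mul_smul a b e).symm

lemma smulOp_one (hAE : ∀ (a : A) (e : E), ‖a • e‖ ≤ ‖a‖ * ‖e‖) :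
    smulOp hAE (1 : A) = 1 :=
  ContinuousLinearMap.ext fun e => one_smul A e

lemma norm_smulOp_le (hAE : ∀ (a : A) (e : E), ‖a • e‖ ≤ ‖a‖ * ‖e‖) (a : A) :
    ‖smulOp hAE a‖ ≤ ‖a‖ :=
  LinearMap.mkContinuous_norm_le _ (norm_nonneg a) _

lemma smul_eq_smulOp_mul [ContinuousConstSMul A E]
    (hAE : ∀ (a : A) (e : E), ‖a • e‖ ≤ ‖a‖ * ‖e‖) (a : A) (S : E →L[ℝ] E) :
    a • S = smulOp hAE a * S :=
  ContinuousLinearMap.ext fun _ => rfl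

end Aux

lemma norm_ringInverse_one_sub_le {R : Type*} [NormedRing R] [CompleteSpace R]
    (t : R) (h1 : ‖(1 : R)‖ ≤ 1) (h : ‖t‖ < 1) :
    ‖Ring.inverse (1 - t)‖ ≤ (1 - ‖t‖)⁻¹ := by
  rw [← geom_series_eq_inverse t h]
  have := tsum_geometric_le_of_norm_lt_one t h
  linarith

/-- `ℓ(σ,g) = max {1, ‖σ(g,g⁻¹)⁻¹‖}`. -/
noncomputable def ell {K A : Type*} [Group K] [NormedRing A]
    (σ : K → K → A) (g : K) : ℝ :=
  max 1 ‖Ring.inverse (σ g g⁻¹)‖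

/-- The σ-bound `b(T) = sup_{g ∈ K} ℓ(σ,g)·‖T(g)‖` of a pseudorepresentation. -/
noncomputable def sigmaBound {K A E : Type*} [Group K] [NormedRing A]
    [NormedAddCommGroup E] [NormedSpace ℝ E]
    (σ : K → K → A) (T : K → E →L[ℝ] E) : ℝ :=
  ⨆ g : K, ell σ g * ‖T g‖

/-- The σ-defect
`r(T) = ‖id − T(1)‖ + sup_{g,h ∈ K} ℓ(σ,g)·‖σ(g,h)·T(gh) − T(g)∘T(h)‖`. -/
noncomputable def sigmaDefect {K A E : Type*} [Group K] [NormedRing A]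
    [NormedAddCommGroup E] [NormedSpace ℝ E]
    [Module A E] [SMulCommClass ℝ A E] [ContinuousConstSMul A E]
    (σ : K → K → A) (T : K → E →L[ℝ] E) : ℝ :=
  ‖(1 : E →L[ℝ] E) - T 1‖ +
    ⨆ p : K × K, ell σ p.1 * ‖σ p.1 p.2 • T (p.1 * p.2) - (T p.1).comp (T p.2)‖

/-- An almost σ-representation of a Hausdorff topological group `K` on a Banach
`A`-module `E` has invertible values, with `‖T(g)⁻¹‖ ≤ b(T)/(1 − r(T))`. -/
theorem almost_representation_invertible
    {K A E : Type*} [Group K] [TopologicalSpace K] [IsTopologicalGroup K] [T2Space K]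
    -- `A` is a unital real Banach algebra
    [NormedRing A] [NormedAlgebra ℝ A] [CompleteSpace A] [NormOneClass A]
    -- `E` is a real Banach space which is an `A`-module
    [NormedAddCommGroup E] [NormedSpace ℝ E] [CompleteSpace E]
    [Module A E] [SMulCommClass ℝ A E] [ContinuousConstSMul A E]
    (hAE : ∀ (a : A) (e : E), ‖a • e‖ ≤ ‖a‖ * ‖e‖)
    -- the action of `K` on `A` by unital isometric algebra automorphisms
    (act : K → A → A)
    (hact_one : ∀ a, act 1 a = a)
    (hact_mul : ∀ g h a, act (g * h) a = act g (act h a))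
    (hact_add : ∀ g a b, act g (a + b) = act g a + act g b)
    (hact_mul' : ∀ g a b, act g (a * b) = act g a * act g b)
    (hact_smul : ∀ g (r : ℝ) (a : A), act g (r • a) = r • act g a)
    (hact_unital : ∀ g, act g 1 = 1)
    (hact_isom : ∀ g a, ‖act g a‖ = ‖a‖)
    (hact_cont : Continuous fun p : K × A => act p.1 p.2)
    -- `σ` is an `A`-valued multiplier for `K`
    (σ : K → K → A)
    (hσ_cont : Continuous fun p : K × K => σ p.1 p.2)
    (hσ_unit : ∀ g h, IsUnit (σ g h))
    (hσ_central : ∀ g h a, σ g h * a = a * σ g h)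
    (hσ_normal₁ : ∀ h, σ 1 h = 1)
    (hσ_normal₂ : ∀ g, σ g 1 = 1)
    (hσ_cocycle : ∀ g h k, σ g h * σ (g * h) k = act g (σ h k) * σ g (h * k))
    -- `T` is an `A`-semilinear pseudorepresentation of `K` on `E`
    (T : K → E →L[ℝ] E)
    (hT_semilinear : ∀ g (a : A) (e : E), T g (a • e) = act g a • T g e)
    -- the σ-bound is finite and the σ-defect is finite
    (hb_fin : BddAbove (Set.range fun g : K => ell σ g * ‖T g‖))
    (hr_fin : BddAbove (Set.range fun p : K × K =>
      ell σ p.1 * ‖σ p.1 p.2 • T (p.1 * p.2) - (T p.1).comp (T p.2)‖))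
    -- `T` is an almost σ-representation
    (h_almost : sigmaDefect σ T ≤ min (1 / 4) (1 / (9 * (sigmaBound σ T) ^ 2))) :
    ∀ g : K, IsUnit (T g) ∧
      ‖Ring.inverse (T g)‖ ≤ sigmaBound σ T / (1 - sigmaDefect σ T) := by
  set b := sigmaBound σ T with hb
  set r := sigmaDefect σ T with hr
  have hr14 : r ≤ 1 / 4 := h_almost.trans (min_le_left _ _)
  have hbound : ∀ g : K, ell σ g * ‖T g‖ ≤ b := fun g => le_ciSup hb_fin g
  have hterm : ∀ p : K × K,
      ell σ p.1 * ‖σ p.1 p.2 • T (p.1 * p.2) - (T p.1).comp (T p.2)‖ ≤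
        r - ‖(1 : E →L[ℝ] E) - T 1‖ := by
    intro p
    have := le_ciSup hr_fin p
    rw [hr, sigmaDefect]
    linarith
  have hell_one : ∀ g : K, (1 : ℝ) ≤ ell σ g := fun g => le_max_left _ _
  have hell_inv_norm : ∀ g : K, ‖Ring.inverse (σ g g⁻¹)‖ ≤ ell σ g :=
    fun g => le_max_right _ _
  -- ell σ g = ell σ g⁻¹
  have hell_symm : ∀ g : K, ell σ g = ell σ g⁻¹ := by
    intro g
    have hσeq : σ g g⁻¹ = act g (σ g⁻¹ g) := by
      have h := hσ_cocycle g g⁻¹ g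
      rw [mul_inv_cancel, inv_mul_cancel, hσ_normal₁, hσ_normal₂, mul_one, mul_one] at h
      exact h
    obtain ⟨u, hu⟩ := hσ_unit g⁻¹ g
    let v : Aˣ := ⟨act g ↑u, act g ↑u⁻¹,
      by rw [← hact_mul', u.mul_inv, hact_unital],
      by rw [← hact_mul', u.inv_mul, hact_unital]⟩
    have h2 : Ring.inverse (act g ↑u) = act g ↑u⁻¹ := by
      rw [show act g (↑u) = (v : A) from rfl, Ring.inverse_unit]; rfl
    have hinv : ‖Ring.inverse (σ g g⁻¹)‖ = ‖Ring.inverse (σ g⁻¹ g)‖ := by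
      rw [hσeq, ← hu, h2, Ring.inverse_unit]
      exact hact_isom g _
    rw [ell, ell, inv_inv, hinv]
  -- key estimate
  have main : ∀ g : K,
      ‖(1 : E →L[ℝ] E) - smulOp hAE (Ring.inverse (σ g g⁻¹)) * (T g * T g⁻¹)‖ ≤ r := by
    intro g
    set ai := Ring.inverse (σ g g⁻¹) with hai
    set D := σ g g⁻¹ • T (g * g⁻¹) - (T g).comp (T g⁻¹) with hD
    have hcomp : smulOp hAE ai * (T g * T g⁻¹) = T 1 - smulOp hAE ai * D := by
      have h1 : smulOp hAE ai * D
          = smulOp hAE ai * (σ g g⁻¹ • T (g * g⁻¹)) - smulOp hAE ai * (T g * T g⁻¹) := by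
        rw [hD, mul_sub]; rfl
      have h2 : smulOp hAE ai * (σ g g⁻¹ • T (g * g⁻¹)) = T 1 := by
        rw [smul_eq_smulOp_mul hAE, ← mul_assoc, smulOp_mul,
          Ring.inverse_mul_cancel _ (hσ_unit g g⁻¹), smulOp_one, one_mul, mul_inv_cancel]
      rw [h1, h2]; abel
    have hnormD : ‖smulOp hAE ai * D‖ ≤ r - ‖(1 : E →L[ℝ] E) - T 1‖ := by
      calc ‖smulOp hAE ai * D‖ ≤ ‖smulOp hAE ai‖ * ‖D‖ := norm_mul_le _ _
        _ ≤ ell σ g * ‖D‖ := by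
            apply mul_le_mul_of_nonneg_right _ (norm_nonneg D)
            exact (norm_smulOp_le hAE ai).trans (hell_inv_norm g)
        _ ≤ r - ‖(1 : E →L[ℝ] E) - T 1‖ := hterm (g, g⁻¹)
    calc ‖(1 : E →L[ℝ] E) - smulOp hAE ai * (T g * T g⁻¹)‖
        = ‖((1 : E →L[ℝ] E) - T 1) + smulOp hAE ai * D‖ := by
          rw [hcomp]; congr 1; abel
      _ ≤ ‖(1 : E →L[ℝ] E) - T 1‖ + ‖smulOp hAE ai * D‖ := norm_add_le _ _
      _ ≤ r := by linarith
  intro g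
  set ai := Ring.inverse (σ g g⁻¹) with hai
  set ai' := Ring.inverse (σ g⁻¹ g) with hai'
  set c := smulOp hAE ai with hc
  set c' := smulOp hAE ai' with hc'
  set U := c * (T g * T g⁻¹) with hU
  set U' := c' * (T g⁻¹ * T g) with hU'
  have hUle : ‖(1 : E →L[ℝ] E) - U‖ ≤ r := main g
  have hU'le : ‖(1 : E →L[ℝ] E) - U'‖ ≤ r := by
    have := main g⁻¹
    rwa [inv_inv] at this
  have hUlt : ‖(1 : E →L[ℝ] E) - U‖ < 1 := by linarith
  have hU'lt : ‖(1 : E →L[ℝ] E) - U'‖ < 1 := by linarith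
  have hUunit : IsUnit U := by
    have := isUnit_one_sub_of_norm_lt_one hUlt
    rwa [sub_sub_cancel] at this
  have hU'unit : IsUnit U' := by
    have := isUnit_one_sub_of_norm_lt_one hU'lt
    rwa [sub_sub_cancel] at this
  have hUinv_norm : ‖Ring.inverse U‖ ≤ (1 - r)⁻¹ := by
    have h1 : ‖Ring.inverse U‖ ≤ (1 - ‖(1 : E →L[ℝ] E) - U‖)⁻¹ := by
      have := norm_ringInverse_one_sub_le ((1 : E →L[ℝ] E) - U)
        (by exact ContinuousLinearMap.norm_id_le (E := E)) hUlt
      rwa [sub_sub_cancel] at this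
    refine h1.trans ?_
    apply inv_anti₀ <;> linarith
  -- the two-sided inverse
  set t := T g⁻¹ * Ring.inverse U * c with ht
  set s := Ring.inverse U' * c' * T g⁻¹ with hs
  have hTgTginv : T g * T g⁻¹ = smulOp hAE (σ g g⁻¹) * U := by
    rw [hU, hc, ← mul_assoc, smulOp_mul, Ring.mul_inverse_cancel _ (hσ_unit g g⁻¹),
      smulOp_one, one_mul]
  have hright : T g * t = 1 := by
    rw [ht, ← mul_assoc, ← mul_assoc, hTgTginv, mul_assoc (smulOp hAE (σ g g⁻¹)),
      Ring.mul_inverse_cancel _ hUunit, mul_one, hc, smulOp_mul,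
      Ring.mul_inverse_cancel _ (hσ_unit g g⁻¹), smulOp_one]
  have hleft : s * T g = 1 := by
    rw [hs, mul_assoc, mul_assoc, ← hU', Ring.inverse_mul_cancel _ hU'unit]
  have hst : s = t := by
    calc s = s * (T g * t) := by rw [hright, mul_one]
      _ = (s * T g) * t := (mul_assoc s (T g) t).symm
      _ = t := by rw [hleft, one_mul]
  have hunit : IsUnit (T g) :=
    ⟨⟨T g, t, hright, by rw [← hst]; exact hleft⟩, rfl⟩
  refine ⟨hunit, ?_⟩
  have hinv_eq : Ring.inverse (T g) = t :=
    Ring.inverse_unit ⟨T g, t, hright, by rw [← hst]; exact hleft⟩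
  rw [hinv_eq]
  have hcb : ‖T g⁻¹‖ * ‖c‖ ≤ b := by
    calc ‖T g⁻¹‖ * ‖c‖ ≤ ‖T g⁻¹‖ * ell σ g⁻¹ := by
          apply mul_le_mul_of_nonneg_left _ (norm_nonneg _)
          rw [← hell_symm g]
          exact (norm_smulOp_le hAE ai).trans (hell_inv_norm g)
      _ = ell σ g⁻¹ * ‖T g⁻¹‖ := mul_comm _ _
      _ ≤ b := hbound g⁻¹
  have h1r : (0 : ℝ) < 1 - r := by linarith
  calc ‖t‖ ≤ ‖T g⁻¹ * Ring.inverse U‖ * ‖c‖ := norm_mul_le _ _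
    _ ≤ (‖T g⁻¹‖ * ‖Ring.inverse U‖) * ‖c‖ :=
        mul_le_mul_of_nonneg_right (norm_mul_le _ _) (norm_nonneg _)
    _ = (‖T g⁻¹‖ * ‖c‖) * ‖Ring.inverse U‖ := by ring
    _ ≤ b * (1 - r)⁻¹ := by
        apply mul_le_mul hcb hUinv_norm (norm_nonneg _)
        exact le_trans (by positivity) hcb
    _ = b / (1 - r) := (div_eq_mul_inv b (1 - r)).symm
end

section
/- Suppose in addition that K is compact with normalized Haar probability measure μ, and let T : K → L(E) be an almost σ-representation with finite σ-bound b(T) which is continuous for the operator norm on L(E). For g ∈ K define the averaged operator T̂(g) = ∫_K σ(g,h)·(T(gh)∘T(h)⁻¹) dμ(h), a Bochner integral in L(E) (the integrand is a continuous L(E)-valued function of h, each T(h) being invertible). Then: (a) T̂ : K → L(E) is again an operator-norm continuous A-semilinear pseudorepresentation with T̂(1) = id; (b) b(T̂) ≤ b(T)/(1 − r(T)); (c) r(T̂) ≤ 2·(b(T)/(1 − r(T)))²·r(T)²; (d) ‖T̂(g) − T(g)‖ ≤ b(T)·r(T)/(1 − r(T)) for every g ∈ K. (Group case of the paper's averaging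 estimates lemma.) -/
open MeasureTheory

/-- The averaged operator `T̂(g) = ∫_K σ(g,h)·(T(gh) ∘ T(h)⁻¹) dμ(h)`
(a Bochner integral in `L(E)`). -/
noncomputable def avgT {K A E : Type*} [Group K] [MeasurableSpace K] [NormedRing A]
    [NormedAddCommGroup E] [NormedSpace ℝ E]
    [Module A E] [SMulCommClass ℝ A E] [ContinuousConstSMul A E]
    (μ : Measure K) (σ : K → K → A) (T : K → E →L[ℝ] E) (g : K) : E →L[ℝ] E :=
  ∫ h, σ g h • ((T (g * h)).comp (Ring.inverse (T h))) ∂μ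

set_option maxHeartbeats 1600000 in
/-- Averaging estimates for almost σ-representations of a compact group:
the average `T̂` is again an operator-norm continuous unital `A`-semilinear
pseudorepresentation, with `b(T̂) ≤ b(T)/(1−r(T))`,
`r(T̂) ≤ 2·(b(T)/(1−r(T)))²·r(T)²` and `‖T̂(g) − T(g)‖ ≤ b(T)·r(T)/(1−r(T))`. -/
theorem almost_representation_averaging
    {K A E : Type*} [Group K] [TopologicalSpace K] [IsTopologicalGroup K] [T2Space K]
    [CompactSpace K] [MeasurableSpace K] [BorelSpace K]
    (μ : Measure K) [μ.IsHaarMeasure] [IsProbabilityMeasure μ]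
    -- `A` is a unital real Banach algebra
    [NormedRing A] [NormedAlgebra ℝ A] [CompleteSpace A] [NormOneClass A]
    -- `E` is a real Banach space which is an `A`-module
    [NormedAddCommGroup E] [NormedSpace ℝ E] [CompleteSpace E]
    [Module A E] [SMulCommClass ℝ A E] [ContinuousConstSMul A E]
    (hAE : ∀ (a : A) (e : E), ‖a • e‖ ≤ ‖a‖ * ‖e‖)
    -- the action of `K` on `A` by unital isometric algebra automorphisms
    (act : K → A → A)
    (hact_one : ∀ a, act 1 a = a)
    (hact_mul : ∀ g h a, act (g * h) a = act g (act h a))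
    (hact_add : ∀ g a b, act g (a + b) = act g a + act g b)
    (hact_mul' : ∀ g a b, act g (a * b) = act g a * act g b)
    (hact_smul : ∀ g (r : ℝ) (a : A), act g (r • a) = r • act g a)
    (hact_unital : ∀ g, act g 1 = 1)
    (hact_isom : ∀ g a, ‖act g a‖ = ‖a‖)
    (hact_cont : Continuous fun p : K × A => act p.1 p.2)
    -- `σ` is an `A`-valued multiplier for `K`
    (σ : K → K → A)
    (hσ_cont : Continuous fun p : K × K => σ p.1 p.2)
    (hσ_unit : ∀ g h, IsUnit (σ g h))
    (hσ_central : ∀ g h a, σ g h * a = a * σ g h)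
    (hσ_normal₁ : ∀ h, σ 1 h = 1)
    (hσ_normal₂ : ∀ g, σ g 1 = 1)
    (hσ_cocycle : ∀ g h k, σ g h * σ (g * h) k = act g (σ h k) * σ g (h * k))
    -- `T` is an operator-norm continuous `A`-semilinear pseudorepresentation
    (T : K → E →L[ℝ] E)
    (hT_cont : Continuous T)
    (hT_semilinear : ∀ g (a : A) (e : E), T g (a • e) = act g a • T g e)
    -- the σ-bound is finite and the σ-defect is finite
    (hb_fin : BddAbove (Set.range fun g : K => ell σ g * ‖T g‖))
    (hr_fin : BddAbove (Set.range fun p : K × K =>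
      ell σ p.1 * ‖σ p.1 p.2 • T (p.1 * p.2) - (T p.1).comp (T p.2)‖))
    -- `T` is an almost σ-representation
    (h_almost : sigmaDefect σ T ≤ min (1 / 4) (1 / (9 * (sigmaBound σ T) ^ 2))) :
    -- (a) `T̂` is an operator-norm continuous unital `A`-semilinear pseudorepresentation
    (Continuous (avgT μ σ T) ∧
      (∀ g (a : A) (e : E), avgT μ σ T g (a • e) = act g a • avgT μ σ T g e) ∧
      avgT μ σ T 1 = 1) ∧
    -- (b) `b(T̂) ≤ b(T)/(1 − r(T))`
    (∀ g : K, ell σ g * ‖avgT μ σ T g‖ ≤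
        sigmaBound σ T / (1 - sigmaDefect σ T)) ∧
    -- (c) `r(T̂) ≤ 2·(b(T)/(1 − r(T)))²·r(T)²`
    (∀ g h : K,
      ‖(1 : E →L[ℝ] E) - avgT μ σ T 1‖ +
          ell σ g * ‖σ g h • avgT μ σ T (g * h) -
            (avgT μ σ T g).comp (avgT μ σ T h)‖ ≤
        2 * (sigmaBound σ T / (1 - sigmaDefect σ T)) ^ 2 * (sigmaDefect σ T) ^ 2) ∧
    -- (d) `‖T̂(g) − T(g)‖ ≤ b(T)·r(T)/(1 − r(T))`
    (∀ g : K, ‖avgT μ σ T g - T g‖ ≤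
        sigmaBound σ T * sigmaDefect σ T / (1 - sigmaDefect σ T)) := by
  classical
  set rs := ⨆ p : K × K, ell σ p.1 * ‖σ p.1 p.2 • T (p.1 * p.2) - (T p.1).comp (T p.2)‖
    with hrs_def
  set b := sigmaBound σ T with hb_def
  set r := sigmaDefect σ T with hr_def
  have hr_eq : r = ‖(1 : E →L[ℝ] E) - T 1‖ + rs := rfl
  have hl_one : ∀ g : K, (1:ℝ) ≤ ell σ g := fun g => le_max_left _ _
  have hl_pos : ∀ g : K, (0:ℝ) < ell σ g := fun g => lt_of_lt_of_le one_pos (hl_one g)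
  have hl_nn : ∀ g : K, (0:ℝ) ≤ ell σ g := fun g => le_of_lt (hl_pos g)
  have hb_le : ∀ g : K, ell σ g * ‖T g‖ ≤ b := fun g => le_ciSup hb_fin g
  have hrs_le : ∀ g h : K, ell σ g * ‖σ g h • T (g * h) - (T g) * (T h)‖ ≤ rs :=
    fun g h => le_ciSup hr_fin (g, h)
  have hrs0 : (0:ℝ) ≤ rs := le_trans (mul_nonneg (hl_nn 1) (norm_nonneg _)) (hrs_le 1 1)
  have hr14 : r ≤ 1/4 := le_trans h_almost (min_le_left _ _)
  have hT1r : ‖(1 : E →L[ℝ] E) - T 1‖ ≤ r := by rw [hr_eq]; linarith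
  have hr0 : (0:ℝ) ≤ r := le_trans (norm_nonneg _) hT1r
  have hrs_r : rs ≤ r := by rw [hr_eq]; linarith [norm_nonneg ((1 : E →L[ℝ] E) - T 1)]
  have h1r : (0:ℝ) < 1 - r := by linarith
  have hb0 : (0:ℝ) ≤ b := le_trans (mul_nonneg (hl_nn 1) (norm_nonneg _)) (hb_le 1)
  set Bc := b / (1 - r) with hBc_def
  have hBc0 : (0:ℝ) ≤ Bc := div_nonneg hb0 (le_of_lt h1r)
  have hbB : b + r * Bc = Bc := by rw [hBc_def]; field_simp; ring
  have hT_le : ∀ g, ‖T g‖ ≤ b := by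
    intro g
    have h1 := hb_le g
    nlinarith [hl_one g, norm_nonneg (T g)]
  -- operator smul facts
  have hsmul_norm : ∀ (a : A) (S : E →L[ℝ] E), ‖a • S‖ ≤ ‖a‖ * ‖S‖ := by
    intro a S
    refine ContinuousLinearMap.opNorm_le_bound _ (by positivity) fun e => ?_
    calc ‖(a • S) e‖ = ‖a • S e‖ := rfl
      _ ≤ ‖a‖ * ‖S e‖ := hAE _ _
      _ ≤ ‖a‖ * (‖S‖ * ‖e‖) := by
          have h1 := S.le_opNorm e
          nlinarith [norm_nonneg a]
      _ = ‖a‖ * ‖S‖ * ‖e‖ := by ring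
  have hsmul_mul : ∀ (a : A) (S U : E →L[ℝ] E), (a • S) * U = a • (S * U) := by
    intro a S U; ext e; rfl
  have hsmul_smul : ∀ (a c : A) (S : E →L[ℝ] E), a • c • S = (a * c) • S :=
    fun a c S => (mul_smul a c S).symm
  have hact_inv : ∀ (x : K) (a : A), act x (act x⁻¹ a) = a := by
    intro x a; rw [← hact_mul, mul_inv_cancel, hact_one]
  have hTsemi_op : ∀ (x : K) (a : A) (S : E →L[ℝ] E),
      (T x) * (a • S) = act x a • ((T x) * S) := by
    intro x a S; ext e
    exact hT_semilinear x a (S e)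
  have hmul1 : ∀ (x : K) (a : A), (T x) * (a • (1 : E →L[ℝ] E)) = act x a • T x := by
    intro x a; rw [hTsemi_op, mul_one]
  have hsmulT : ∀ (x : K) (a : A), a • T x = (T x) * ((act x⁻¹ a) • (1 : E →L[ℝ] E)) := by
    intro x a; rw [hmul1, hact_inv]
  have hl_inv₁ : ∀ x : K, ‖Ring.inverse (σ x⁻¹ x)‖ ≤ ell σ x⁻¹ := by
    intro x
    have : ell σ x⁻¹ = max 1 ‖Ring.inverse (σ x⁻¹ x)‖ := by rw [ell, inv_inv]
    rw [this]; exact le_max_right _ _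
  have hl_inv₂ : ∀ x : K, ‖Ring.inverse (σ x x⁻¹)‖ ≤ ell σ x := fun x => le_max_right _ _
  -- invertibility of each T x
  have hunit : ∀ x : K, IsUnit (T x) ∧ ‖Ring.inverse (T x)‖ ≤ Bc := by
    intro x
    set W : E →L[ℝ] E := Ring.inverse (σ x⁻¹ x) • T x⁻¹ with hW
    set V : E →L[ℝ] E := act x⁻¹ (Ring.inverse (σ x x⁻¹)) • T x⁻¹ with hV
    have hWnorm : ‖W‖ ≤ b := by
      calc ‖W‖ ≤ ‖Ring.inverse (σ x⁻¹ x)‖ * ‖T x⁻¹‖ := hsmul_norm _ _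
        _ ≤ ell σ x⁻¹ * ‖T x⁻¹‖ :=
            mul_le_mul_of_nonneg_right (hl_inv₁ x) (norm_nonneg _)
        _ ≤ b := hb_le x⁻¹
    have hWT : ‖(1 : E →L[ℝ] E) - W * T x‖ ≤ r := by
      have hkey : (1 : E →L[ℝ] E) - W * T x
          = ((1 : E →L[ℝ] E) - T 1) +
            Ring.inverse (σ x⁻¹ x) • (σ x⁻¹ x • T (x⁻¹ * x) - T x⁻¹ * T x) := by
        rw [hW, hsmul_mul, smul_sub, hsmul_smul,
          Ring.inverse_mul_cancel _ (hσ_unit x⁻¹ x), one_smul, inv_mul_cancel]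
        abel
      rw [hkey, hr_eq]
      refine le_trans (norm_add_le _ _) (add_le_add le_rfl ?_)
      calc ‖Ring.inverse (σ x⁻¹ x) • (σ x⁻¹ x • T (x⁻¹ * x) - T x⁻¹ * T x)‖
          ≤ ‖Ring.inverse (σ x⁻¹ x)‖ * ‖σ x⁻¹ x • T (x⁻¹ * x) - T x⁻¹ * T x‖ := hsmul_norm _ _
        _ ≤ ell σ x⁻¹ * ‖σ x⁻¹ x • T (x⁻¹ * x) - T x⁻¹ * T x‖ :=
            mul_le_mul_of_nonneg_right (hl_inv₁ x) (norm_nonneg _)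
        _ ≤ rs := hrs_le x⁻¹ x
    have hTV : ‖(1 : E →L[ℝ] E) - T x * V‖ ≤ r := by
      have hkey : (1 : E →L[ℝ] E) - T x * V
          = ((1 : E →L[ℝ] E) - T 1) +
            Ring.inverse (σ x x⁻¹) • (σ x x⁻¹ • T (x * x⁻¹) - T x * T x⁻¹) := by
        rw [hV, hTsemi_op, hact_inv, smul_sub, hsmul_smul,
          Ring.inverse_mul_cancel _ (hσ_unit x x⁻¹), one_smul, mul_inv_cancel]
        abel
      rw [hkey, hr_eq]
      refine le_trans (norm_add_le _ _) (add_le_add le_rfl ?_)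
      calc ‖Ring.inverse (σ x x⁻¹) • (σ x x⁻¹ • T (x * x⁻¹) - T x * T x⁻¹)‖
          ≤ ‖Ring.inverse (σ x x⁻¹)‖ * ‖σ x x⁻¹ • T (x * x⁻¹) - T x * T x⁻¹‖ := hsmul_norm _ _
        _ ≤ ell σ x * ‖σ x x⁻¹ • T (x * x⁻¹) - T x * T x⁻¹‖ :=
            mul_le_mul_of_nonneg_right (hl_inv₂ x) (norm_nonneg _)
        _ ≤ rs := hrs_le x x⁻¹
    have hy1 : ‖(1 : E →L[ℝ] E) - W * T x‖ < 1 := lt_of_le_of_lt hWT (by linarith)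
    have hz1 : ‖(1 : E →L[ℝ] E) - T x * V‖ < 1 := lt_of_le_of_lt hTV (by linarith)
    set v : (E →L[ℝ] E)ˣ := Units.oneSub _ hy1 with hv
    set w : (E →L[ℝ] E)ˣ := Units.oneSub _ hz1 with hw
    have hv_val : (v : E →L[ℝ] E) = W * T x := by
      rw [hv, Units.val_oneSub, sub_sub_cancel]
    have hw_val : (w : E →L[ℝ] E) = T x * V := by
      rw [hw, Units.val_oneSub, sub_sub_cancel]
    have hright : T x * (V * ↑w⁻¹) = 1 := by
      rw [← mul_assoc, ← hw_val]; exact w.mul_inv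
    have hleft : ((↑v⁻¹ : E →L[ℝ] E) * W) * T x = 1 := by
      rw [mul_assoc, ← hv_val]; exact v.inv_mul
    have heq : ((↑v⁻¹ : E →L[ℝ] E) * W) = V * ↑w⁻¹ := by
      calc ((↑v⁻¹ : E →L[ℝ] E) * W) = ((↑v⁻¹ : E →L[ℝ] E) * W) * (T x * (V * ↑w⁻¹)) := by
            rw [hright, mul_one]
        _ = (((↑v⁻¹ : E →L[ℝ] E) * W) * T x) * (V * ↑w⁻¹) := by
            simp only [mul_assoc]
        _ = V * ↑w⁻¹ := by rw [hleft, one_mul]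
    have hu : IsUnit (T x) := by
      refine ⟨⟨T x, V * ↑w⁻¹, hright, ?_⟩, rfl⟩
      rw [← heq]; exact hleft
    have hinv_eq : Ring.inverse (T x) = (↑v⁻¹ : E →L[ℝ] E) * W := by
      have h1 : Ring.inverse (T x) * (T x * (V * ↑w⁻¹)) = Ring.inverse (T x) := by
        rw [hright, mul_one]
      rw [← mul_assoc, Ring.inverse_mul_cancel _ hu, one_mul] at h1
      rw [← h1, heq]
    have hvinv : ‖(↑v⁻¹ : E →L[ℝ] E)‖ ≤ (1 - r)⁻¹ := by
      have h2 : (↑v⁻¹ : E →L[ℝ] E) * ↑v = 1 := v.inv_mul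
      have h3 : (↑v⁻¹ : E →L[ℝ] E) = 1 + ↑v⁻¹ * ((1 : E →L[ℝ] E) - W * T x) := by
        have h4 : (↑v : E →L[ℝ] E) = 1 - ((1 : E →L[ℝ] E) - W * T x) := by
          rw [hv_val]; abel
        rw [h4, mul_sub, mul_one, sub_eq_iff_eq_add] at h2
        exact h2
      have h5 : ‖(↑v⁻¹ : E →L[ℝ] E)‖ ≤ 1 + ‖(↑v⁻¹ : E →L[ℝ] E)‖ * r := by
        calc ‖(↑v⁻¹ : E →L[ℝ] E)‖
            = ‖(1 : E →L[ℝ] E) + ↑v⁻¹ * ((1 : E →L[ℝ] E) - W * T x)‖ := by rw [← h3]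
          _ ≤ ‖(1 : E →L[ℝ] E)‖ + ‖(↑v⁻¹ : E →L[ℝ] E) * ((1 : E →L[ℝ] E) - W * T x)‖ :=
              norm_add_le _ _
          _ ≤ 1 + ‖(↑v⁻¹ : E →L[ℝ] E)‖ * r := by
              refine add_le_add ContinuousLinearMap.norm_id_le ?_
              exact le_trans (norm_mul_le _ _)
                (mul_le_mul_of_nonneg_left hWT (norm_nonneg _))
      have h6 : ‖(↑v⁻¹ : E →L[ℝ] E)‖ * (1 - r) ≤ 1 := by nlinarith
      calc ‖(↑v⁻¹ : E →L[ℝ] E)‖ = ‖(↑v⁻¹ : E →L[ℝ] E)‖ * (1 - r) * (1 - r)⁻¹ := by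
            field_simp
        _ ≤ 1 * (1 - r)⁻¹ := by
            exact mul_le_mul_of_nonneg_right h6 (le_of_lt (inv_pos.mpr h1r))
        _ = (1 - r)⁻¹ := one_mul _
    refine ⟨hu, ?_⟩
    rw [hinv_eq]
    calc ‖(↑v⁻¹ : E →L[ℝ] E) * W‖ ≤ ‖(↑v⁻¹ : E →L[ℝ] E)‖ * ‖W‖ := norm_mul_le _ _
      _ ≤ (1 - r)⁻¹ * b := mul_le_mul hvinv hWnorm (norm_nonneg _) (le_of_lt (inv_pos.mpr h1r))
      _ = Bc := by rw [hBc_def]; ring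
  have hUnit : ∀ x : K, IsUnit (T x) := fun x => (hunit x).1
  have hiT : ∀ x : K, ‖Ring.inverse (T x)‖ ≤ Bc := fun x => (hunit x).2
  have hTiT : ∀ x : K, T x * Ring.inverse (T x) = 1 := fun x =>
    Ring.mul_inverse_cancel _ (hUnit x)
  have hiTT : ∀ x : K, Ring.inverse (T x) * T x = 1 := fun x =>
    Ring.inverse_mul_cancel _ (hUnit x)
  -- the integrand F and its difference G from T
  set F : K → K → E →L[ℝ] E := fun g h => σ g h • (T (g * h) * Ring.inverse (T h)) with hFdef
  have hF : ∀ g, avgT μ σ T g = ∫ h, F g h ∂μ := fun g => rfl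
  set G : K → K → E →L[ℝ] E := fun g h => F g h - T g with hGdef
  have hG_eq : ∀ g h : K, G g h = (σ g h • T (g * h) - T g * T h) * Ring.inverse (T h) := by
    intro g h
    simp only [hGdef, hFdef]
    rw [sub_mul, mul_assoc, hTiT h, mul_one, hsmul_mul]
  have hF_eq : ∀ g h : K, F g h = T g + G g h := by
    intro g h; simp only [hGdef]; abel
  have hG_bound : ∀ g h : K, ell σ g * ‖G g h‖ ≤ r * Bc := by
    intro g h
    rw [hG_eq g h]
    calc ell σ g * ‖(σ g h • T (g * h) - T g * T h) * Ring.inverse (T h)‖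
        ≤ ell σ g * (‖σ g h • T (g * h) - T g * T h‖ * ‖Ring.inverse (T h)‖) :=
          mul_le_mul_of_nonneg_left (norm_mul_le _ _) (hl_nn g)
      _ = (ell σ g * ‖σ g h • T (g * h) - T g * T h‖) * ‖Ring.inverse (T h)‖ := by ring
      _ ≤ rs * Bc := mul_le_mul (hrs_le g h) (hiT h) (norm_nonneg _) hrs0
      _ ≤ r * Bc := mul_le_mul_of_nonneg_right hrs_r hBc0
  have hG_b' : ∀ g h : K, ‖G g h‖ ≤ r * Bc := by
    intro g h
    have h1 := hG_bound g h
    nlinarith [hl_one g, norm_nonneg (G g h)]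
  have hG_div : ∀ g h : K, ‖G g h‖ ≤ r * Bc / ell σ g := by
    intro g h
    rw [le_div_iff₀ (hl_pos g)]
    calc ‖G g h‖ * ell σ g = ell σ g * ‖G g h‖ := by ring
      _ ≤ r * Bc := hG_bound g h
  -- continuity and integrability
  have hci : ∀ {f : K → E →L[ℝ] E}, Continuous f → Integrable f μ := fun hf =>
    hf.integrable_of_hasCompactSupport (HasCompactSupport.of_compactSpace _)
  have hcont_iT : Continuous fun x : K => Ring.inverse (T x) := by
    rw [continuous_iff_continuousAt]
    intro x
    obtain ⟨u, hu⟩ := hUnit x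
    exact ContinuousAt.comp (hu ▸ NormedRing.inverse_continuousAt u) hT_cont.continuousAt
  have hcont_smul1 : Continuous fun a : A => a • (1 : E →L[ℝ] E) := by
    have hΦ : ∀ a c : A, (a + c) • (1 : E →L[ℝ] E) = a • 1 + c • 1 := fun a c => add_smul a c 1
    refine AddMonoidHomClass.continuous_of_bound
      (AddMonoidHom.mk' (fun a : A => a • (1 : E →L[ℝ] E)) hΦ) 1 fun a => ?_
    rw [one_mul]
    refine le_trans (hsmul_norm a 1) ?_
    have h1 : ‖(1 : E →L[ℝ] E)‖ ≤ 1 := ContinuousLinearMap.norm_id_le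
    nlinarith [norm_nonneg a]
  have hsmul_comp : ∀ (a : A) (S : E →L[ℝ] E), (a • (1 : E →L[ℝ] E)).comp S = a • S := by
    intro a S; ext e; rfl
  have hcont_F : ∀ g : K, Continuous (F g) := by
    intro g
    have h1 : Continuous fun h : K => σ g h • (1 : E →L[ℝ] E) :=
      hcont_smul1.comp (hσ_cont.comp (continuous_const.prodMk continuous_id))
    have h2 : Continuous fun h : K => (T (g * h)).comp (Ring.inverse (T h)) :=
      (hT_cont.comp (continuous_mul_left g)).clm_comp hcont_iT
    have h3 : Continuous fun h : K =>
        (σ g h • (1 : E →L[ℝ] E)).comp ((T (g * h)).comp (Ring.inverse (T h))) :=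
      h1.clm_comp h2
    convert h3 using 2
    exact (hsmul_comp _ _).symm
  have hcont_Fg : ∀ h : K, Continuous fun g : K => F g h := by
    intro h
    have h1 : Continuous fun g : K => σ g h • (1 : E →L[ℝ] E) :=
      hcont_smul1.comp (hσ_cont.comp (continuous_id.prodMk continuous_const))
    have h2 : Continuous fun g : K => (T (g * h)).comp (Ring.inverse (T h)) :=
      (hT_cont.comp (continuous_mul_right h)).clm_comp continuous_const
    have h3 := h1.clm_comp h2
    convert h3 using 2
    exact (hsmul_comp _ _).symm
  have hcont_G : ∀ g : K, Continuous (G g) := fun g => by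
    simp only [hGdef]; exact (hcont_F g).sub continuous_const
  have hI_F : ∀ g : K, Integrable (F g) μ := fun g => hci (hcont_F g)
  have hI_G : ∀ g : K, Integrable (G g) μ := fun g => hci (hcont_G g)
  -- difference formula
  have hdiff : ∀ g : K, avgT μ σ T g - T g = ∫ h, G g h ∂μ := by
    intro g
    have h1 : ∫ h, G g h ∂μ = (∫ h, F g h ∂μ) - ∫ _h, T g ∂μ :=
      integral_sub (hI_F g) (integrable_const _)
    rw [hF g, h1, integral_const, probReal_univ, one_smul]
  have hΔdiv : ∀ g : K, ‖avgT μ σ T g - T g‖ ≤ r * Bc / ell σ g := by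
    intro g
    rw [hdiff g]
    refine le_trans (norm_integral_le_of_norm_le_const
      (Filter.Eventually.of_forall fun h => hG_div g h)) ?_
    rw [probReal_univ, mul_one]
  have hΔ' : ∀ g : K, ‖avgT μ σ T g - T g‖ ≤ r * Bc := fun g =>
    le_trans (hΔdiv g) (div_le_self (mul_nonneg hr0 hBc0) (hl_one g))
  have hF_bound : ∀ g h : K, ‖F g h‖ ≤ Bc := by
    intro g h
    rw [hF_eq g h]
    calc ‖T g + G g h‖ ≤ ‖T g‖ + ‖G g h‖ := norm_add_le _ _
      _ ≤ b + r * Bc := add_le_add (hT_le g) (hG_b' g h)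
      _ = Bc := hbB
  -- avgT 1 = 1
  have havg_one : avgT μ σ T 1 = 1 := by
    rw [hF 1]
    have h1 : ∀ h : K, F 1 h = 1 := by
      intro h
      simp only [hFdef]
      rw [hσ_normal₁, one_mul, hTiT, one_smul]
    simp only [h1]
    rw [integral_const, probReal_univ, one_smul]
  -- semilinearity of the average
  have hsemi : ∀ g (a : A) (e : E), avgT μ σ T g (a • e) = act g a • avgT μ σ T g e := by
    intro g a e
    have hpt : ∀ h : K, F g h (a • e) = (act g a • (1 : E →L[ℝ] E)) (F g h e) := by
      intro h
      have hTh : ∀ z : E, T h (Ring.inverse (T h) z) = z := by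
        intro z
        have h0 := DFunLike.congr_fun (hTiT h) z
        simpa using h0
      have hhT : ∀ z : E, Ring.inverse (T h) (T h z) = z := by
        intro z
        have h0 := DFunLike.congr_fun (hiTT h) z
        simpa using h0
      have hiTsemi : Ring.inverse (T h) (a • e) = act h⁻¹ a • (Ring.inverse (T h) e) := by
        have h1 : T h (act h⁻¹ a • Ring.inverse (T h) e) = a • e := by
          rw [hT_semilinear, hact_inv, hTh]
        rw [← h1, hhT]
      show σ g h • (T (g * h) (Ring.inverse (T h) (a • e)))
          = act g a • (σ g h • (T (g * h) (Ring.inverse (T h) e)))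
      rw [hiTsemi, hT_semilinear]
      have hactm : act (g * h) (act h⁻¹ a) = act g a := by
        rw [← hact_mul, mul_inv_cancel_right]
      rw [hactm, ← mul_smul, hσ_central, mul_smul]
    calc avgT μ σ T g (a • e) = ∫ h, F g h (a • e) ∂μ := by
          rw [hF g]; exact ContinuousLinearMap.integral_apply (hI_F g) _
      _ = ∫ h, (act g a • (1 : E →L[ℝ] E)) (F g h e) ∂μ := by simp only [hpt]
      _ = (act g a • (1 : E →L[ℝ] E)) (∫ h, F g h e ∂μ) :=
          (act g a • (1 : E →L[ℝ] E)).integral_comp_comm ((hI_F g).apply_continuousLinearMap e)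
      _ = act g a • (avgT μ σ T g e) := by
          rw [hF g, ContinuousLinearMap.integral_apply (hI_F g) e]; rfl
  -- continuity of the average
  have hcont_avg : Continuous (avgT μ σ T) := by
    have hFjoint : Continuous fun p : K × K => F p.1 p.2 := by
      have h1 : Continuous fun p : K × K => σ p.1 p.2 • (1 : E →L[ℝ] E) :=
        hcont_smul1.comp hσ_cont
      have h2 : Continuous fun p : K × K => (T (p.1 * p.2)).comp (Ring.inverse (T p.2)) :=
        (hT_cont.comp continuous_mul).clm_comp (hcont_iT.comp continuous_snd)
      have h3 := h1.clm_comp h2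
      convert h3 using 2
      exact (hsmul_comp _ _).symm
    set Fc : C(K × K, E →L[ℝ] E) := ⟨fun p => F p.1 p.2, hFjoint⟩ with hFc
    have hΦ : LipschitzWith 1 (fun u : C(K, E →L[ℝ] E) => ∫ h, u h ∂μ) := by
      refine LipschitzWith.of_dist_le_mul fun u v => ?_
      rw [NNReal.coe_one, one_mul, dist_eq_norm]
      have hsub : ∫ h, u h ∂μ - ∫ h, v h ∂μ = ∫ h, (u h - v h) ∂μ :=
        (integral_sub (hci u.continuous) (hci v.continuous)).symm
      rw [hsub]
      refine le_trans (norm_integral_le_of_norm_le_const (C := dist u v)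
        (Filter.Eventually.of_forall fun h => ?_)) ?_
      · calc ‖u h - v h‖ = dist (u h) (v h) := (dist_eq_norm _ _).symm
          _ ≤ dist u v := ContinuousMap.dist_apply_le_dist h
      · rw [probReal_univ, mul_one]
    have h4 : Continuous fun g : K => ∫ h, (Fc.curry g) h ∂μ :=
      hΦ.continuous.comp Fc.curry.continuous
    have h5 : avgT μ σ T = fun g : K => ∫ h, (Fc.curry g) h ∂μ := by
      funext g
      rw [hF g]
      rfl
    rw [h5]; exact h4
  -- the pointwise master identity
  have hpoint : ∀ g k h : K, σ g k • F (g * k) h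
      = T g * G k h + G g (k * h) * G k h + F g (k * h) * T k := by
    intro g k h
    have hGT : G k h + T k = (σ k h • T (k * h)) * Ring.inverse (T h) := by
      rw [hG_eq k h, sub_mul, mul_assoc, hTiT h, mul_one, sub_add_cancel]
    have hsplit : T g * G k h + G g (k * h) * G k h + F g (k * h) * T k
        = F g (k * h) * (G k h + T k) := by
      rw [hF_eq g (k * h)]
      noncomm_ring
    rw [hsplit, hGT]
    symm
    have hactm : act (g * (k * h)) (act (k * h)⁻¹ (σ k h)) = act g (σ k h) := by
      rw [← hact_mul, mul_inv_cancel_right]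
    calc F g (k * h) * ((σ k h • T (k * h)) * Ring.inverse (T h))
        = σ g (k * h) • ((T (g * (k * h)) * Ring.inverse (T (k * h))) *
            ((σ k h • T (k * h)) * Ring.inverse (T h))) := by
          simp only [hFdef]; rw [hsmul_mul]
      _ = σ g (k * h) • ((T (g * (k * h)) * (Ring.inverse (T (k * h)) * (T (k * h) *
            ((act (k * h)⁻¹ (σ k h)) • (1 : E →L[ℝ] E))))) * Ring.inverse (T h)) := by
          rw [hsmulT]
          simp only [mul_assoc]
      _ = σ g (k * h) • ((T (g * (k * h)) * ((act (k * h)⁻¹ (σ k h)) • (1 : E →L[ℝ] E))) *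
            Ring.inverse (T h)) := by
          rw [← mul_assoc (Ring.inverse (T (k * h))), hiTT, one_mul]
      _ = σ g (k * h) • ((act g (σ k h) • T (g * (k * h))) * Ring.inverse (T h)) := by
          rw [hmul1, hactm]
      _ = (σ g (k * h) * act g (σ k h)) • (T (g * (k * h)) * Ring.inverse (T h)) := by
          rw [hsmul_mul, hsmul_smul]
      _ = (σ g k * σ (g * k) h) • (T (g * (k * h)) * Ring.inverse (T h)) := by
          rw [hσ_central, ← hσ_cocycle]
      _ = σ g k • F (g * k) h := by
          rw [← hsmul_smul]
          simp only [hFdef]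
          rw [mul_assoc]
  -- the master integral identity
  have hmaster : ∀ g k : K, σ g k • avgT μ σ T (g * k)
      = avgT μ σ T g * T k + T g * avgT μ σ T k - T g * T k +
        ∫ h, G g (k * h) * G k h ∂μ := by
    intro g k
    have hcGk2 : Continuous fun h : K => G g (k * h) := (hcont_G g).comp (continuous_mul_left k)
    have hcF2 : Continuous fun h : K => F g (k * h) := (hcont_F g).comp (continuous_mul_left k)
    have hI1 : Integrable (fun h => T g * G k h) μ := hci (continuous_const.clm_comp (hcont_G k))
    have hI2 : Integrable (fun h => G g (k * h) * G k h) μ := hci (hcGk2.clm_comp (hcont_G k))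
    have hI3 : Integrable (fun h => F g (k * h) * T k) μ := hci (hcF2.clm_comp continuous_const)
    have h2 : ∀ S : E →L[ℝ] E,
        (ContinuousLinearMap.compL ℝ E E E (σ g k • (1 : E →L[ℝ] E))) S = σ g k • S := by
      intro S; rw [ContinuousLinearMap.compL_apply, hsmul_comp]
    have s1 : σ g k • avgT μ σ T (g * k) = ∫ h, σ g k • F (g * k) h ∂μ := by
      rw [hF (g * k)]
      have h1 := (ContinuousLinearMap.compL ℝ E E E
        (σ g k • (1 : E →L[ℝ] E))).integral_comp_comm (hI_F (g * k))
      calc σ g k • ∫ h, F (g * k) h ∂μ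
          = (ContinuousLinearMap.compL ℝ E E E (σ g k • (1 : E →L[ℝ] E)))
              (∫ h, F (g * k) h ∂μ) := (h2 _).symm
        _ = ∫ h, (ContinuousLinearMap.compL ℝ E E E (σ g k • (1 : E →L[ℝ] E)))
              (F (g * k) h) ∂μ := h1.symm
        _ = ∫ h, σ g k • F (g * k) h ∂μ := by simp only [h2]
    have s2 : ∫ h, σ g k • F (g * k) h ∂μ
        = ∫ h, (T g * G k h + G g (k * h) * G k h + F g (k * h) * T k) ∂μ :=
      integral_congr_ae (Filter.Eventually.of_forall fun h => hpoint g k h)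
    have hI12 : Integrable (fun h => T g * G k h + G g (k * h) * G k h) μ :=
      Integrable.add (f := fun h => T g * G k h) (g := fun h => G g (k * h) * G k h) hI1 hI2
    have s3 : ∫ h, (T g * G k h + G g (k * h) * G k h + F g (k * h) * T k) ∂μ
        = (∫ h, T g * G k h ∂μ) + (∫ h, G g (k * h) * G k h ∂μ) +
          ∫ h, F g (k * h) * T k ∂μ := by
      rw [integral_add hI12 hI3, integral_add hI1 hI2]
    have t1 : ∫ h, T g * G k h ∂μ = T g * (avgT μ σ T k - T k) := by
      have h1 := (ContinuousLinearMap.compL ℝ E E E (T g)).integral_comp_comm (hI_G k)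
      simp only [ContinuousLinearMap.compL_apply] at h1
      simp only [ContinuousLinearMap.mul_def]
      rw [h1, ← hdiff k]
    have t3 : ∫ h, F g (k * h) * T k ∂μ = avgT μ σ T g * T k := by
      have h1 := ((ContinuousLinearMap.compL ℝ E E E).flip (T k)).integral_comp_comm (hci hcF2)
      simp only [ContinuousLinearMap.flip_apply, ContinuousLinearMap.compL_apply] at h1
      simp only [ContinuousLinearMap.mul_def]
      rw [h1, integral_mul_left_eq_self (fun x => F g x) k, ← hF g]
    rw [s1, s2, s3, t1, t3]
    noncomm_ring
  -- bound on the quadratic remainder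
  have hR2 : ∀ g k : K, ‖∫ h, G g (k * h) * G k h ∂μ‖ ≤ (r * Bc / ell σ g) * (r * Bc) := by
    intro g k
    refine le_trans (norm_integral_le_of_norm_le_const
      (C := (r * Bc / ell σ g) * (r * Bc))
      (Filter.Eventually.of_forall fun h => ?_)) ?_
    · exact le_trans (norm_mul_le _ _)
        (mul_le_mul (hG_div g (k * h)) (hG_b' k h) (norm_nonneg _)
          (div_nonneg (mul_nonneg hr0 hBc0) (hl_nn g)))
    · rw [probReal_univ, mul_one]
  refine ⟨⟨hcont_avg, hsemi, havg_one⟩, ?_, ?_, ?_⟩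
  · -- (b)
    intro g
    have h1 : ‖avgT μ σ T g‖ ≤ ‖T g‖ + ‖avgT μ σ T g - T g‖ := by
      calc ‖avgT μ σ T g‖ = ‖T g + (avgT μ σ T g - T g)‖ := by
            rw [show T g + (avgT μ σ T g - T g) = avgT μ σ T g from by abel]
        _ ≤ ‖T g‖ + ‖avgT μ σ T g - T g‖ := norm_add_le _ _
    calc ell σ g * ‖avgT μ σ T g‖ ≤ ell σ g * (‖T g‖ + ‖avgT μ σ T g - T g‖) :=
          mul_le_mul_of_nonneg_left h1 (hl_nn g)
      _ = ell σ g * ‖T g‖ + ell σ g * ‖avgT μ σ T g - T g‖ := by ring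
      _ ≤ b + r * Bc := by
          refine add_le_add (hb_le g) ?_
          calc ell σ g * ‖avgT μ σ T g - T g‖ ≤ ell σ g * (r * Bc / ell σ g) :=
                mul_le_mul_of_nonneg_left (hΔdiv g) (hl_nn g)
            _ = r * Bc := by rw [mul_comm]; exact div_mul_cancel₀ _ (hl_pos g).ne'
      _ = Bc := hbB
  · -- (c)
    intro g h
    rw [havg_one, sub_self, norm_zero, zero_add]
    have hQ : σ g h • avgT μ σ T (g * h) - (avgT μ σ T g).comp (avgT μ σ T h)
        = (∫ l, G g (h * l) * G h l ∂μ) -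
          (avgT μ σ T g - T g) * (avgT μ σ T h - T h) := by
      calc σ g h • avgT μ σ T (g * h) - (avgT μ σ T g).comp (avgT μ σ T h)
          = σ g h • avgT μ σ T (g * h) - avgT μ σ T g * avgT μ σ T h := rfl
        _ = (∫ l, G g (h * l) * G h l ∂μ) -
            (avgT μ σ T g - T g) * (avgT μ σ T h - T h) := by
            rw [hmaster g h]; noncomm_ring
    rw [hQ]
    have h1 : ‖(∫ l, G g (h * l) * G h l ∂μ) -
          (avgT μ σ T g - T g) * (avgT μ σ T h - T h)‖
        ≤ (r * Bc / ell σ g) * (r * Bc) + (r * Bc / ell σ g) * (r * Bc) := by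
      refine le_trans (norm_sub_le _ _) (add_le_add (hR2 g h) ?_)
      exact le_trans (norm_mul_le _ _)
        (mul_le_mul (hΔdiv g) (hΔ' h) (norm_nonneg _)
          (div_nonneg (mul_nonneg hr0 hBc0) (hl_nn g)))
    have hℓ : ell σ g ≠ 0 := (hl_pos g).ne'
    calc ell σ g * ‖(∫ l, G g (h * l) * G h l ∂μ) -
          (avgT μ σ T g - T g) * (avgT μ σ T h - T h)‖
        ≤ ell σ g * ((r * Bc / ell σ g) * (r * Bc) + (r * Bc / ell σ g) * (r * Bc)) :=
          mul_le_mul_of_nonneg_left h1 (hl_nn g)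
      _ = 2 * Bc ^ 2 * r ^ 2 := by field_simp; ring
  · -- (d)
    intro g
    exact le_trans (hΔ' g) (le_of_eq (by rw [hBc_def]; ring))
end

section
/- Almost representation theorem (compact group case): let K be compact with normalized Haar probability measure μ, and let T : K → L(E) be an almost σ-representation with finite σ-bound b(T) which is continuous for the operator norm on L(E). Then there exists a map R : K → L(E), continuous for the operator norm and A-semilinear, such that R(1) = id, σ(g,h)·R(gh) = R(g)∘R(h) for all g,h ∈ K (so R is a σ-representation; in particular every R(g) is invertible), and ‖R(g) − T(g)‖ ≤ 4·b(T)·r(T) for all g ∈ K. -/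
open MeasureTheory

set_option linter.unusedSectionVars false
set_option synthInstance.maxHeartbeats 1000000
set_option maxHeartbeats 1000000

namespace AlmostRep

variable {K A E : Type*} [Group K]
    [NormedRing A] [NormedAlgebra ℝ A] [NormOneClass A]
    [NormedAddCommGroup E] [NormedSpace ℝ E] [CompleteSpace E]
    [Module A E] [SMulCommClass ℝ A E] [ContinuousConstSMul A E]

local notation "X" => E →L[ℝ] E

theorem smul_op_le (hAE : ∀ (a : A) (e : E), ‖a • e‖ ≤ ‖a‖ * ‖e‖) (a : A) (F : X) :
    ‖a • F‖ ≤ ‖a‖ * ‖F‖ := by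
  refine ContinuousLinearMap.opNorm_le_bound _ (mul_nonneg (norm_nonneg a) (norm_nonneg F))
    (fun e => ?_)
  rw [ContinuousLinearMap.smul_apply]
  calc ‖a • F e‖ ≤ ‖a‖ * ‖F e‖ := hAE _ _
  _ ≤ ‖a‖ * (‖F‖ * ‖e‖) := mul_le_mul_of_nonneg_left (F.le_opNorm e) (norm_nonneg a)
  _ = ‖a‖ * ‖F‖ * ‖e‖ := by ring

theorem smul_mul (a : A) (F G : X) : (a • F) * G = a • (F * G) := by
  ext e
  rw [ContinuousLinearMap.mul_apply, ContinuousLinearMap.smul_apply,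
    ContinuousLinearMap.smul_apply, ContinuousLinearMap.mul_apply]

/-- multiplication operator -/
noncomputable def mop (E : Type*) [NormedAddCommGroup E] [NormedSpace ℝ E]
    [Module A E] [SMulCommClass ℝ A E] [ContinuousConstSMul A E] (a : A) : E →L[ℝ] E :=
  a • (1 : E →L[ℝ] E)

theorem mop_apply (a : A) (e : E) : mop E a e = a • e := by
  rw [mop, ContinuousLinearMap.smul_apply, ContinuousLinearMap.one_apply]

theorem mop_mul (a : A) (F : X) : mop E a * F = a • F := by
  ext e
  rw [ContinuousLinearMap.mul_apply, mop_apply, ContinuousLinearMap.smul_apply]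

theorem mop_mul_mop (a b : A) : mop E a * mop E b = mop E (a * b) := by
  ext e
  rw [ContinuousLinearMap.mul_apply, mop_apply, mop_apply, mop_apply, smul_smul]

theorem mop_one : mop E (1 : A) = 1 := by
  ext e; rw [mop_apply, one_smul, ContinuousLinearMap.one_apply]

theorem mop_lipschitz (hAE : ∀ (a : A) (e : E), ‖a • e‖ ≤ ‖a‖ * ‖e‖) :
    LipschitzWith 1 (mop E (A := A)) := by
  refine LipschitzWith.of_dist_le_mul (fun a b => ?_)
  rw [dist_eq_norm, dist_eq_norm]
  have h : mop E a - mop E b = mop E (a - b) := by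
    ext e; rw [ContinuousLinearMap.sub_apply, mop_apply, mop_apply, mop_apply, sub_smul]
  rw [h, NNReal.coe_one, one_mul]
  calc ‖mop E (a - b)‖ ≤ ‖a - b‖ * ‖(1 : X)‖ := smul_op_le hAE _ _
  _ ≤ ‖a - b‖ * 1 := mul_le_mul_of_nonneg_left ContinuousLinearMap.norm_id_le (norm_nonneg _)
  _ = ‖a - b‖ := mul_one _

theorem mop_cont (hAE : ∀ (a : A) (e : E), ‖a • e‖ ≤ ‖a‖ * ‖e‖) :
    Continuous (mop E (A := A)) := (mop_lipschitz hAE).continuous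

/-- `F` is semilinear with respect to the map `φ`. -/
def SemiLin (φ : A → A) (F : X) : Prop := ∀ (a : A) (e : E), F (a • e) = φ a • F e

theorem SemiLin.comp_smul {φ : A → A} {F : X} (hF : SemiLin φ F) (a : A) (G : X) :
    F * (a • G) = φ a • (F * G) := by
  ext e
  rw [ContinuousLinearMap.mul_apply, ContinuousLinearMap.smul_apply,
    ContinuousLinearMap.smul_apply, ContinuousLinearMap.mul_apply, hF]

theorem SemiLin.sub {φ : A → A} {F G : X} (hF : SemiLin φ F) (hG : SemiLin φ G) :
    SemiLin φ (F - G) := fun a e => by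
  rw [ContinuousLinearMap.sub_apply, ContinuousLinearMap.sub_apply, hF, hG, smul_sub]

theorem SemiLin.mul {φ ψ : A → A} {F G : X} (hF : SemiLin φ F) (hG : SemiLin ψ G) :
    SemiLin (fun a => φ (ψ a)) (F * G) := fun a e => by
  rw [ContinuousLinearMap.mul_apply, ContinuousLinearMap.mul_apply, hG, hF]

theorem SemiLin.csmul {φ : A → A} {F : X} (hF : SemiLin φ F) (c : A)
    (hc : ∀ a : A, c * a = a * c) : SemiLin φ (c • F) := fun a e => by
  rw [ContinuousLinearMap.smul_apply, ContinuousLinearMap.smul_apply, hF, smul_smul, smul_smul,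
    hc]


theorem one_le_ell (σ : K → K → A) (g : K) : 1 ≤ ell σ g := le_max_left _ _

theorem ell_pos (σ : K → K → A) (g : K) : (0:ℝ) < ell σ g := lt_of_lt_of_le one_pos (one_le_ell σ g)

theorem inv_norm_le_ell (σ : K → K → A) (g : K) : ‖Ring.inverse (σ g g⁻¹)‖ ≤ ell σ g :=
  le_max_right _ _

variable (act : K → A → A) (σ : K → K → A)

theorem semilin_inverse
    (hact_one : ∀ a, act 1 a = a)
    (hact_mul : ∀ g h a, act (g * h) a = act g (act h a))
    {g : K} {F : X} (hu : IsUnit F) (hF : SemiLin (act g) F) :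
    SemiLin (act g⁻¹) (Ring.inverse F) := by
  intro a e
  have hFV : ∀ x, F (Ring.inverse F x) = x := fun x => by
    rw [← ContinuousLinearMap.mul_apply, Ring.mul_inverse_cancel _ hu,
      ContinuousLinearMap.one_apply]
  have hVF : ∀ x, Ring.inverse F (F x) = x := fun x => by
    rw [← ContinuousLinearMap.mul_apply, Ring.inverse_mul_cancel _ hu,
      ContinuousLinearMap.one_apply]
  have hinj : Function.Injective F := fun x y hxy => by
    rw [← hVF x, hxy, hVF]
  apply hinj
  rw [hFV, hF, ← hact_mul, mul_inv_cancel, hact_one, hFV]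

theorem isUnit_and_inverse_bound
    (hAE : ∀ (a : A) (e : E), ‖a • e‖ ≤ ‖a‖ * ‖e‖)
    (hact_one : ∀ a, act 1 a = a)
    (hact_mul : ∀ g h a, act (g * h) a = act g (act h a))
    (hσ_unit : ∀ g h, IsUnit (σ g h))
    (S : K → X) (hS : ∀ g, SemiLin (act g) (S g)) (β ρ δ : ℝ)
    (hb : ∀ g, ell σ g * ‖S g‖ ≤ β)
    (hd : ∀ g h, ell σ g * ‖σ g h • S (g * h) - S g * S h‖ ≤ ρ)
    (h1 : ‖1 - S 1‖ ≤ δ) (hε : δ + ρ < 1) :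
    ∀ g, IsUnit (S g) ∧ ‖Ring.inverse (S g)‖ ≤ β / (1 - (δ + ρ)) := by
  have hε' : (0:ℝ) < 1 - (δ + ρ) := by linarith
  have hβ0 : (0:ℝ) ≤ β :=
    le_trans (mul_nonneg (le_of_lt (ell_pos σ 1)) (norm_nonneg _)) (hb 1)
  intro g
  -- norm of defect at (g, g⁻¹), smeared by the inverse of σ g g⁻¹
  have key : ∀ (g' : K) (s' : X),
      ‖s'‖ ≤ ell σ g' → s' * (σ g' g'⁻¹ • S (g' * g'⁻¹)) = S 1 →
      ‖1 - s' * (S g' * S g'⁻¹)‖ ≤ δ + ρ := by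
    intro g' s' hs'norm hs'mul
    have hw : (1:X) - s' * (S g' * S g'⁻¹) =
        (1 - S 1) + s' * (σ g' g'⁻¹ • S (g' * g'⁻¹) - S g' * S g'⁻¹) := by
      rw [mul_sub, hs'mul]; abel
    rw [hw]
    refine le_trans (norm_add_le _ _) ?_
    have h2 : ‖s' * (σ g' g'⁻¹ • S (g' * g'⁻¹) - S g' * S g'⁻¹)‖ ≤ ρ := by
      refine le_trans (norm_mul_le _ _) ?_
      calc ‖s'‖ * ‖σ g' g'⁻¹ • S (g' * g'⁻¹) - S g' * S g'⁻¹‖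
          ≤ ell σ g' * ‖σ g' g'⁻¹ • S (g' * g'⁻¹) - S g' * S g'⁻¹‖ :=
            mul_le_mul_of_nonneg_right hs'norm (norm_nonneg _)
        _ ≤ ρ := hd g' g'⁻¹
    linarith
  -- right approximate inverse
  have hs : σ g g⁻¹ * Ring.inverse (σ g g⁻¹) = 1 := Ring.mul_inverse_cancel _ (hσ_unit _ _)
  have hs' : Ring.inverse (σ g g⁻¹) * σ g g⁻¹ = 1 := Ring.inverse_mul_cancel _ (hσ_unit _ _)
  set y : X := act g⁻¹ (Ring.inverse (σ g g⁻¹)) • S g⁻¹ with hy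
  have hxy : S g * y = mop E (Ring.inverse (σ g g⁻¹)) * (S g * S g⁻¹) := by
    rw [hy, (hS g).comp_smul, ← hact_mul, mul_inv_cancel, hact_one, mop_mul]
  have hw1 : ‖1 - S g * y‖ ≤ δ + ρ := by
    rw [hxy]
    refine key g (mop E (Ring.inverse (σ g g⁻¹))) ?_ ?_
    · calc ‖mop E (Ring.inverse (σ g g⁻¹))‖ ≤ ‖Ring.inverse (σ g g⁻¹)‖ * ‖(1:X)‖ :=
          smul_op_le hAE _ _
      _ ≤ ‖Ring.inverse (σ g g⁻¹)‖ * 1 :=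
          mul_le_mul_of_nonneg_left ContinuousLinearMap.norm_id_le (norm_nonneg _)
      _ ≤ ell σ g := by rw [mul_one]; exact inv_norm_le_ell σ g
    · rw [mop_mul, smul_smul, hs', one_smul, mul_inv_cancel]
  -- left approximate inverse
  have hs₂ : Ring.inverse (σ g⁻¹ g) * σ g⁻¹ g = 1 := Ring.inverse_mul_cancel _ (hσ_unit _ _)
  set z : X := Ring.inverse (σ g⁻¹ g) • S g⁻¹ with hz
  have hzx : z * S g = mop E (Ring.inverse (σ g⁻¹ g)) * (S g⁻¹ * S g) := by
    rw [hz, smul_mul, mop_mul]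
  have hznorm : ‖z‖ ≤ β := by
    rw [hz]
    refine le_trans (smul_op_le hAE _ _) (le_trans ?_ (hb g⁻¹))
    refine mul_le_mul_of_nonneg_right ?_ (norm_nonneg _)
    have : ‖Ring.inverse (σ g⁻¹ g⁻¹⁻¹)‖ ≤ ell σ g⁻¹ := inv_norm_le_ell σ g⁻¹
    rwa [inv_inv] at this
  have hw2 : ‖1 - z * S g‖ ≤ δ + ρ := by
    rw [hzx]
    have hkey := key g⁻¹ (mop E (Ring.inverse (σ g⁻¹ g))) ?_ ?_
    · rwa [inv_inv] at hkey
    · calc ‖mop E (Ring.inverse (σ g⁻¹ g))‖ ≤ ‖Ring.inverse (σ g⁻¹ g)‖ * ‖(1:X)‖ :=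
          smul_op_le hAE _ _
      _ ≤ ‖Ring.inverse (σ g⁻¹ g)‖ * 1 :=
          mul_le_mul_of_nonneg_left ContinuousLinearMap.norm_id_le (norm_nonneg _)
      _ ≤ ell σ g⁻¹ := by
          rw [mul_one]
          have := inv_norm_le_ell σ g⁻¹
          rwa [inv_inv] at this
    · rw [inv_inv, mop_mul, smul_smul, hs₂, one_smul, inv_mul_cancel]
  -- build the two-sided inverse
  have hw1lt : ‖1 - S g * y‖ < 1 := lt_of_le_of_lt hw1 hε
  have hw2lt : ‖1 - z * S g‖ < 1 := lt_of_le_of_lt hw2 hε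
  set u₁ : Xˣ := Units.oneSub (1 - S g * y) hw1lt with hu₁
  set u₂ : Xˣ := Units.oneSub (1 - z * S g) hw2lt with hu₂
  have hu₁val : (u₁ : X) = S g * y := by
    show (1:X) - (1 - S g * y) = S g * y
    abel
  have hu₂val : (u₂ : X) = z * S g := by
    show (1:X) - (1 - z * S g) = z * S g
    abel
  set c : X := y * ↑u₁⁻¹ with hc
  have hSc : S g * c = 1 := by
    rw [hc, ← mul_assoc, ← hu₁val, Units.mul_inv]
  set d : X := ↑u₂⁻¹ * z with hdd
  have hdS : d * S g = 1 := by
    rw [hdd, mul_assoc, ← hu₂val, Units.inv_mul]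
  have hdc : d = c := by
    calc d = d * (S g * c) := by rw [hSc, mul_one]
    _ = (d * S g) * c := (mul_assoc d (S g) c).symm
    _ = c := by rw [hdS, one_mul]
  have hcS : c * S g = 1 := by rw [← hdc]; exact hdS
  have hunit : IsUnit (S g) := ⟨⟨S g, c, hSc, hcS⟩, rfl⟩
  refine ⟨hunit, ?_⟩
  have hinv_eq : Ring.inverse (S g) = c := by
    have := Ring.inverse_unit (⟨S g, c, hSc, hcS⟩ : Xˣ)
    exact this
  -- bound ‖u₂⁻¹‖
  have hvnorm : ‖(↑u₂⁻¹ : X)‖ ≤ 1 / (1 - (δ + ρ)) := by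
    have hveq : (↑u₂⁻¹ : X) = 1 + ↑u₂⁻¹ * (1 - z * S g) := by
      have h := Units.inv_mul u₂
      have : (↑u₂⁻¹ : X) * (1 - (1 - z * S g)) = 1 := by
        rw [show (1:X) - (1 - z * S g) = z * S g by abel, ← hu₂val, Units.inv_mul]
      calc (↑u₂⁻¹ : X) = ↑u₂⁻¹ * (1 - (1 - z * S g)) + ↑u₂⁻¹ * (1 - z * S g) := by
            rw [mul_sub, mul_one]; abel
      _ = 1 + ↑u₂⁻¹ * (1 - z * S g) := by rw [this]
    rw [le_div_iff₀ hε']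
    have h1' : ‖(↑u₂⁻¹ : X)‖ ≤ 1 + ‖(↑u₂⁻¹ : X)‖ * (δ + ρ) := by
      calc ‖(↑u₂⁻¹ : X)‖ = ‖(1:X) + ↑u₂⁻¹ * (1 - z * S g)‖ := by rw [← hveq]
      _ ≤ ‖(1:X)‖ + ‖(↑u₂⁻¹ : X) * (1 - z * S g)‖ := norm_add_le _ _
      _ ≤ 1 + ‖(↑u₂⁻¹ : X)‖ * ‖1 - z * S g‖ := by
          refine add_le_add ContinuousLinearMap.norm_id_le (norm_mul_le _ _)
      _ ≤ 1 + ‖(↑u₂⁻¹ : X)‖ * (δ + ρ) := by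
          refine add_le_add (le_refl _) (mul_le_mul_of_nonneg_left hw2 (norm_nonneg _))
    nlinarith [norm_nonneg (↑u₂⁻¹ : X)]
  rw [hinv_eq, ← hdc, hdd]
  calc ‖(↑u₂⁻¹ : X) * z‖ ≤ ‖(↑u₂⁻¹ : X)‖ * ‖z‖ := norm_mul_le _ _
  _ ≤ (1 / (1 - (δ + ρ))) * β := by
      exact mul_le_mul hvnorm hznorm (norm_nonneg _) (by positivity)
  _ = β / (1 - (δ + ρ)) := by rw [one_div_mul_eq_div]


section Measure

variable [TopologicalSpace K] [IsTopologicalGroup K] [T2Space K]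
    [CompactSpace K] [MeasurableSpace K] [BorelSpace K]
    (μ : Measure K) [μ.IsHaarMeasure] [IsProbabilityMeasure μ]

theorem integrable_cont {Y : Type*} [NormedAddCommGroup Y] {f : K → Y} (hf : Continuous f) :
    Integrable f μ := by
  refine hf.integrable_of_hasCompactSupport ?_
  exact IsCompact.of_isClosed_subset isCompact_univ (isClosed_tsupport f) (Set.subset_univ _)

theorem norm_integral_le' {Y : Type*} [NormedAddCommGroup Y] [NormedSpace ℝ Y]
    {f : K → Y} {C : ℝ} (hf : ∀ h, ‖f h‖ ≤ C) : ‖∫ h, f h ∂μ‖ ≤ C := by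
  have := norm_integral_le_of_norm_le_const (μ := μ) (Filter.Eventually.of_forall hf)
  simpa [probReal_univ] using this

theorem integral_const' {Y : Type*} [NormedAddCommGroup Y] [NormedSpace ℝ Y] [CompleteSpace Y] (c : Y) :
    ∫ _, c ∂μ = c := by
  rw [integral_const, probReal_univ, one_smul]

theorem integral_mul_left_comm (c : X) {f : K → X} (hf : Integrable f μ) :
    ∫ h, c * f h ∂μ = c * ∫ h, f h ∂μ :=
  (ContinuousLinearMap.mul ℝ X c).integral_comp_comm hf

theorem integral_mul_right_comm (c : X) {f : K → X} (hf : Integrable f μ) :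
    ∫ h, f h * c ∂μ = (∫ h, f h ∂μ) * c :=
  ((ContinuousLinearMap.mul ℝ X).flip c).integral_comp_comm hf

theorem integral_smul_comm' (a : A) {f : K → X} (hf : Integrable f μ) :
    ∫ h, a • f h ∂μ = a • ∫ h, f h ∂μ := by
  have h1 : ∀ F : X, a • F = mop E a * F := fun F => (mop_mul a F).symm
  simp_rw [h1]
  exact integral_mul_left_comm μ (mop E a) hf

theorem integral_smulE_comm (a : A) {f : K → E} (hf : Integrable f μ) :
    ∫ h, a • f h ∂μ = a • ∫ h, f h ∂μ := by
  have h1 : ∀ e : E, a • e = mop E a e := fun e => (mop_apply a e).symm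
  simp_rw [h1]
  exact (mop E a).integral_comp_comm hf

/-- continuity of a parametric integral over a compact space -/
theorem continuous_parint {Y : Type*} [NormedAddCommGroup Y] [NormedSpace ℝ Y]
    {G : K × K → Y} (hG : Continuous G) :
    Continuous fun g => ∫ h, G (g, h) ∂μ := by
  have hlip : LipschitzWith 1 (fun φ : C(K, Y) => ∫ h, φ h ∂μ) := by
    refine LipschitzWith.of_dist_le_mul (fun φ ψ => ?_)
    rw [NNReal.coe_one, one_mul, dist_eq_norm, ← integral_sub
      (integrable_cont μ φ.continuous) (integrable_cont μ ψ.continuous)]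
    refine norm_integral_le' μ (fun h => ?_)
    rw [← dist_eq_norm]
    exact ContinuousMap.dist_apply_le_dist h
  have : (fun g => ∫ h, G (g, h) ∂μ) =
      (fun φ : C(K, Y) => ∫ h, φ h ∂μ) ∘ (fun g => (ContinuousMap.mk G hG).curry g) := by
    funext g; rfl
  rw [this]
  exact hlip.continuous.comp (ContinuousMap.mk G hG).curry.continuous

end Measure


theorem SemiLin.add {φ : A → A} {F G : X} (hF : SemiLin φ F) (hG : SemiLin φ G) :
    SemiLin φ (F + G) := fun a e => by
  rw [ContinuousLinearMap.add_apply, ContinuousLinearMap.add_apply, hF, hG, smul_add]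

/-- the defect operator -/
noncomputable def Dmap (σ : K → K → A) (S : K → X) : K → K → X :=
  fun a b => σ a b • S (a * b) - S a * S b

/-- the pointwise inverse -/
noncomputable def Vmap (S : K → X) : K → X := fun k => Ring.inverse (S k)

theorem I1 {σ : K → K → A} {S : K → X} (hu : ∀ k, IsUnit (S k)) (g h : K) :
    σ g h • (S (g * h) * Vmap S h) = S g + Dmap σ S g h * Vmap S h := by
  have hSV : S h * Vmap S h = 1 := Ring.mul_inverse_cancel _ (hu h)
  rw [← smul_mul]
  have : σ g h • S (g * h) = S g * S h + Dmap σ S g h := by rw [Dmap]; abel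
  rw [this, add_mul, mul_assoc, hSV, mul_one, add_comm]

theorem semilin_D
    (hact_mul : ∀ g h a, act (g * h) a = act g (act h a))
    (hσ_central : ∀ g h a, σ g h * a = a * σ g h)
    {S : K → X} (hS : ∀ g, SemiLin (act g) (S g)) (g h : K) :
    SemiLin (act (g * h)) (Dmap σ S g h) := by
  have h1 : SemiLin (act (g * h)) (σ g h • S (g * h)) :=
    (hS (g * h)).csmul (σ g h) (hσ_central g h)
  have h2 : SemiLin (act (g * h)) (S g * S h) := by
    have := (hS g).mul (hS h)
    have heq : (fun a => act g (act h a)) = act (g * h) := funext fun a => (hact_mul g h a).symm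
    rwa [heq] at this
  exact h1.sub h2

theorem star_identity
    (hσ_cocycle : ∀ g h k, σ g h * σ (g * h) k = act g (σ h k) * σ g (h * k))
    {S : K → X} (hS : ∀ g, SemiLin (act g) (S g)) (g g' h : K) :
    σ g g' • Dmap σ S (g * g') h =
      act g (σ g' h) • Dmap σ S g (g' * h) - Dmap σ S g g' * S h + S g * Dmap σ S g' h := by
  simp only [Dmap]
  rw [smul_sub, smul_smul, hσ_cocycle g g' h, mul_assoc g g' h, mul_smul, ← smul_mul]
  rw [smul_sub (act g (σ g' h)), sub_mul, mul_sub, (hS g).comp_smul, mul_assoc (S g) (S g') (S h)]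
  abel

theorem pw_identity
    (hact_one : ∀ a, act 1 a = a)
    (hact_mul : ∀ g h a, act (g * h) a = act g (act h a))
    (hσ_central : ∀ g h a, σ g h * a = a * σ g h)
    (hσ_cocycle : ∀ g h k, σ g h * σ (g * h) k = act g (σ h k) * σ g (h * k))
    {S : K → X} (hS : ∀ g, SemiLin (act g) (S g)) (hu : ∀ k, IsUnit (S k)) (g g' h : K) :
    σ g g' • (Dmap σ S (g * g') h * Vmap S h)
      - Dmap σ S g (g' * h) * Vmap S (g' * h) * S g'
      - S g * (Dmap σ S g' h * Vmap S h) + Dmap σ S g g'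
    = Dmap σ S g (g' * h) * Vmap S (g' * h) * (Dmap σ S g' h * Vmap S h) := by
  have hSV : ∀ k, S k * Vmap S k = 1 := fun k => Ring.mul_inverse_cancel _ (hu k)
  have hVS : ∀ k, Vmap S k * S k = 1 := fun k => Ring.inverse_mul_cancel _ (hu k)
  have h1 : σ g g' • (Dmap σ S (g * g') h * Vmap S h)
      = act g (σ g' h) • (Dmap σ S g (g' * h) * Vmap S h)
        - Dmap σ S g g' + S g * (Dmap σ S g' h * Vmap S h) := by
    rw [← smul_mul, star_identity act σ hσ_cocycle hS g g' h, add_mul, sub_mul, smul_mul,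
      mul_assoc (Dmap σ S g g') (S h) (Vmap S h), hSV, mul_one, mul_assoc]
  rw [h1]
  have h2 : act g (σ g' h) • (Dmap σ S g (g' * h) * Vmap S h)
      = Dmap σ S g (g' * h) * Vmap S (g' * h) * S g'
        + Dmap σ S g (g' * h) * Vmap S (g' * h) * (Dmap σ S g' h * Vmap S h) := by
    have e1 : Dmap σ S g (g' * h) * Vmap S (g' * h) * S g'
        + Dmap σ S g (g' * h) * Vmap S (g' * h) * (Dmap σ S g' h * Vmap S h)
        = Dmap σ S g (g' * h) * Vmap S (g' * h) * (S g' + Dmap σ S g' h * Vmap S h) := by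
      rw [mul_add]
    rw [e1, ← I1 hu g' h]
    have hVsemi : SemiLin (act (g' * h)⁻¹) (Vmap S (g' * h)) :=
      semilin_inverse act hact_one hact_mul (hu (g' * h)) (hS (g' * h))
    rw [mul_assoc, hVsemi.comp_smul, ← mul_assoc (Vmap S (g' * h)) (S (g' * h)) (Vmap S h),
      hVS, one_mul]
    have hDsemi : SemiLin (act (g * (g' * h))) (Dmap σ S g (g' * h)) :=
      semilin_D act σ hact_mul hσ_central hS g (g' * h)
    rw [hDsemi.comp_smul, ← hact_mul, mul_inv_cancel_right]
  rw [h2]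
  abel


section Step

variable [TopologicalSpace K] [IsTopologicalGroup K] [T2Space K]
    [CompactSpace K] [MeasurableSpace K] [BorelSpace K]
    (μ : Measure K) [μ.IsHaarMeasure] [IsProbabilityMeasure μ]

/-- one averaging step -/
noncomputable def Phi (σ : K → K → A) (S : K → X) : K → X :=
  fun g => ∫ h, σ g h • (S (g * h) * Ring.inverse (S h)) ∂μ

theorem step
    (hAE : ∀ (a : A) (e : E), ‖a • e‖ ≤ ‖a‖ * ‖e‖)
    (hact_one : ∀ a, act 1 a = a)
    (hact_mul : ∀ g h a, act (g * h) a = act g (act h a))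
    (hσ_cont : Continuous fun p : K × K => σ p.1 p.2)
    (hσ_unit : ∀ g h, IsUnit (σ g h))
    (hσ_central : ∀ g h a, σ g h * a = a * σ g h)
    (hσ_normal₁ : ∀ h, σ 1 h = 1)
    (hσ_cocycle : ∀ g h k, σ g h * σ (g * h) k = act g (σ h k) * σ g (h * k))
    (S : K → X) (β ρ δ : ℝ)
    (hcont : Continuous S) (hS : ∀ g, SemiLin (act g) (S g))
    (hb : ∀ g, ell σ g * ‖S g‖ ≤ β)
    (hd : ∀ g h, ell σ g * ‖σ g h • S (g * h) - S g * S h‖ ≤ ρ)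
    (h1 : ‖1 - S 1‖ ≤ δ) (hρ0 : 0 ≤ ρ) (hδ0 : 0 ≤ δ) (hε : δ + ρ < 1) :
    Continuous (Phi μ σ S) ∧ (∀ g, SemiLin (act g) (Phi μ σ S g)) ∧ Phi μ σ S 1 = 1 ∧
    (∀ g, ell σ g * ‖Phi μ σ S g‖ ≤ β + ρ * (β / (1 - (δ + ρ)))) ∧
    (∀ g h, ell σ g * ‖σ g h • Phi μ σ S (g * h) - Phi μ σ S g * Phi μ σ S h‖ ≤
        2 * (β / (1 - (δ + ρ)))^2 * ρ^2) ∧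
    (∀ g, ell σ g * ‖Phi μ σ S g - S g‖ ≤ ρ * (β / (1 - (δ + ρ)))) := by
  have hε' : (0:ℝ) < 1 - (δ + ρ) := by linarith
  set B : ℝ := β / (1 - (δ + ρ)) with hBdef
  have hβ0 : (0:ℝ) ≤ β :=
    le_trans (mul_nonneg (le_of_lt (ell_pos σ 1)) (norm_nonneg _)) (hb 1)
  have hB0 : (0:ℝ) ≤ B := div_nonneg hβ0 (le_of_lt hε')
  have hui := isUnit_and_inverse_bound act σ hAE hact_one hact_mul hσ_unit S hS β ρ δ hb hd h1 hε
  have hu : ∀ k, IsUnit (S k) := fun k => (hui k).1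
  have hVnorm : ∀ k, ‖Vmap S k‖ ≤ B := fun k => (hui k).2
  have hSV : ∀ k, S k * Vmap S k = 1 := fun k => Ring.mul_inverse_cancel _ (hu k)
  have hVS : ∀ k, Vmap S k * S k = 1 := fun k => Ring.inverse_mul_cancel _ (hu k)
  have hVsemi : ∀ k, SemiLin (act k⁻¹) (Vmap S k) := fun k =>
    semilin_inverse act hact_one hact_mul (hu k) (hS k)
  have hVcont : Continuous (Vmap S) := by
    rw [continuous_iff_continuousAt]
    intro k
    have h1' : ContinuousAt Ring.inverse (S k) := by
      have := NormedRing.inverse_continuousAt (hu k).unit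
      rwa [IsUnit.unit_spec] at this
    exact h1'.comp hcont.continuousAt
  -- defect bounds
  have hDnorm : ∀ g h, ‖Dmap σ S g h‖ ≤ ρ / ell σ g := fun g h => by
    rw [le_div_iff₀ (ell_pos σ g), mul_comm]
    exact hd g h
  have hDnorm' : ∀ g h, ‖Dmap σ S g h‖ ≤ ρ := fun g h =>
    le_trans (hDnorm g h) (div_le_self hρ0 (one_le_ell σ g))
  -- continuity of the defect
  have hDcont : Continuous fun p : K × K => Dmap σ S p.1 p.2 := by
    have heq : (fun p : K × K => Dmap σ S p.1 p.2)
        = fun p : K × K => mop E (σ p.1 p.2) * S (p.1 * p.2) - S p.1 * S p.2 := by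
      funext p; rw [Dmap, mop_mul]
    rw [heq]
    exact (((mop_cont hAE).comp hσ_cont).mul (hcont.comp continuous_mul)).sub
      ((hcont.comp continuous_fst).mul (hcont.comp continuous_snd))
  have hDcont1 : ∀ g, Continuous fun h => Dmap σ S g h := fun g =>
    hDcont.comp (continuous_const.prodMk continuous_id)
  have hIcont : ∀ g, Continuous fun h => Dmap σ S g h * Vmap S h := fun g =>
    (hDcont1 g).mul hVcont
  have hIint : ∀ g, Integrable (fun h => Dmap σ S g h * Vmap S h) μ := fun g =>
    integrable_cont μ (hIcont g)
  -- the correction term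
  set e : K → X := fun g => ∫ h, Dmap σ S g h * Vmap S h ∂μ with he_def
  have he_norm : ∀ g, ‖e g‖ ≤ ρ / ell σ g * B := fun g => by
    refine norm_integral_le' μ (fun h => ?_)
    exact le_trans (norm_mul_le _ _)
      (mul_le_mul (hDnorm g h) (hVnorm h) (norm_nonneg _)
        (div_nonneg hρ0 (le_of_lt (ell_pos σ g))))
  have he_ell : ∀ g, ell σ g * ‖e g‖ ≤ ρ * B := fun g => by
    calc ell σ g * ‖e g‖ ≤ ell σ g * (ρ / ell σ g * B) :=
          mul_le_mul_of_nonneg_left (he_norm g) (le_of_lt (ell_pos σ g))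
    _ = ρ * B := by
        have hl : ell σ g ≠ 0 := ne_of_gt (ell_pos σ g)
        field_simp
  have he_norm' : ∀ g, ‖e g‖ ≤ ρ * B := fun g =>
    le_trans (he_norm g) (by
      refine mul_le_mul_of_nonneg_right (div_le_self hρ0 (one_le_ell σ g)) hB0)
  -- Phi = S + e
  have hPhi_eq : ∀ g, Phi μ σ S g = S g + e g := by
    intro g
    have hpt : ∀ h, σ g h • (S (g * h) * Ring.inverse (S h))
        = S g + Dmap σ S g h * Vmap S h := fun h => I1 hu g h
    calc Phi μ σ S g = ∫ h, (S g + Dmap σ S g h * Vmap S h) ∂μ := by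
          rw [Phi]; exact integral_congr_ae (Filter.Eventually.of_forall hpt)
    _ = S g + e g := by
        rw [integral_add (integrable_const (S g)) (hIint g), integral_const' μ (S g)]
  -- continuity
  have hPhiCont : Continuous (Phi μ σ S) := by
    have hG : Continuous fun p : K × K => σ p.1 p.2 • (S (p.1 * p.2) * Ring.inverse (S p.2)) := by
      have heq : (fun p : K × K => σ p.1 p.2 • (S (p.1 * p.2) * Ring.inverse (S p.2)))
          = fun p : K × K => mop E (σ p.1 p.2) * (S (p.1 * p.2) * Vmap S p.2) := by
        funext p; rw [mop_mul, Vmap]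
      rw [heq]
      exact ((mop_cont hAE).comp hσ_cont).mul
        ((hcont.comp continuous_mul).mul (hVcont.comp continuous_snd))
    exact continuous_parint μ hG
  -- semilinearity
  have heSemi : ∀ g, SemiLin (act g) (e g) := by
    intro g a x
    have happly : ∀ (y : E), Continuous fun h => (Dmap σ S g h * Vmap S h) y := fun y =>
      ((ContinuousLinearMap.apply ℝ E y).continuous).comp (hIcont g)
    have h1' : e g (a • x) = ∫ h, (Dmap σ S g h * Vmap S h) (a • x) ∂μ :=
      ContinuousLinearMap.integral_apply (hIint g) (a • x)
    have hpt : ∀ h, (Dmap σ S g h * Vmap S h) (a • x)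
        = act g a • ((Dmap σ S g h * Vmap S h) x) := by
      intro h
      rw [ContinuousLinearMap.mul_apply, hVsemi h, semilin_D act σ hact_mul hσ_central hS g h,
        ← hact_mul, mul_inv_cancel_right, ContinuousLinearMap.mul_apply]
    rw [h1', integral_congr_ae (Filter.Eventually.of_forall hpt),
      integral_smulE_comm μ (act g a) (integrable_cont μ (happly x)),
      ← ContinuousLinearMap.integral_apply (hIint g) x]
  have hPhiSemi : ∀ g, SemiLin (act g) (Phi μ σ S g) := by
    intro g
    rw [hPhi_eq g]
    exact (hS g).add (heSemi g)
  -- Phi 1 = 1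
  have hPhi1 : Phi μ σ S 1 = 1 := by
    rw [hPhi_eq 1]
    have hpt : ∀ h, Dmap σ S 1 h * Vmap S h = 1 - S 1 := by
      intro h
      have : Dmap σ S 1 h = (1 - S 1) * S h := by
        rw [Dmap, hσ_normal₁, one_smul, one_mul, sub_mul, one_mul]
      rw [this, mul_assoc, hSV, mul_one]
    have : e 1 = 1 - S 1 := by
      rw [he_def]
      calc (∫ h, Dmap σ S 1 h * Vmap S h ∂μ) = ∫ _, (1:X) - S 1 ∂μ :=
            integral_congr_ae (Filter.Eventually.of_forall hpt)
      _ = 1 - S 1 := integral_const' μ _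
    rw [this]
    abel
  -- norm bound
  have hPhib : ∀ g, ell σ g * ‖Phi μ σ S g‖ ≤ β + ρ * B := by
    intro g
    rw [hPhi_eq g]
    calc ell σ g * ‖S g + e g‖ ≤ ell σ g * (‖S g‖ + ‖e g‖) :=
          mul_le_mul_of_nonneg_left (norm_add_le _ _) (le_of_lt (ell_pos σ g))
    _ = ell σ g * ‖S g‖ + ell σ g * ‖e g‖ := mul_add _ _ _
    _ ≤ β + ρ * B := add_le_add (hb g) (he_ell g)
  -- distance
  have hPhidist : ∀ g, ell σ g * ‖Phi μ σ S g - S g‖ ≤ ρ * B := by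
    intro g
    rw [hPhi_eq g, add_sub_cancel_left]
    exact he_ell g
  -- defect of Phi
  have hPhid : ∀ g g', ell σ g * ‖σ g g' • Phi μ σ S (g * g') - Phi μ σ S g * Phi μ σ S g'‖ ≤
      2 * B^2 * ρ^2 := by
    intro g g'
    -- algebraic expansion
    have hexp : σ g g' • Phi μ σ S (g * g') - Phi μ σ S g * Phi μ σ S g'
        = Dmap σ S g g' + σ g g' • e (g * g') - e g * S g' - S g * e g' - e g * e g' := by
      rw [hPhi_eq (g * g'), hPhi_eq g, hPhi_eq g', smul_add, add_mul, mul_add, mul_add, Dmap]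
      abel
    -- integral representations
    have hB1 : σ g g' • e (g * g') = ∫ h, σ g g' • (Dmap σ S (g * g') h * Vmap S h) ∂μ :=
      (integral_smul_comm' μ (σ g g') (hIint (g * g'))).symm
    have hB2 : S g * e g' = ∫ h, S g * (Dmap σ S g' h * Vmap S h) ∂μ :=
      (integral_mul_left_comm μ (S g) (hIint g')).symm
    have hB3 : e g * S g' = ∫ h, Dmap σ S g (g' * h) * Vmap S (g' * h) * S g' ∂μ := by
      rw [he_def]
      calc (∫ h, Dmap σ S g h * Vmap S h ∂μ) * S g'
          = ∫ h, Dmap σ S g h * Vmap S h * S g' ∂μ :=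
            (integral_mul_right_comm μ (S g') (hIint g)).symm
      _ = ∫ h, Dmap σ S g (g' * h) * Vmap S (g' * h) * S g' ∂μ :=
            (integral_mul_left_eq_self (fun k => Dmap σ S g k * Vmap S k * S g') g').symm
    have hB4 : Dmap σ S g g' = ∫ _, Dmap σ S g g' ∂μ := (integral_const' μ _).symm
    -- integrability of all pieces
    have hint1 : Integrable (fun h => σ g g' • (Dmap σ S (g * g') h * Vmap S h)) μ := by
      refine integrable_cont μ ?_
      have heq : (fun h => σ g g' • (Dmap σ S (g * g') h * Vmap S h))
          = fun h => mop E (σ g g') * (Dmap σ S (g * g') h * Vmap S h) := by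
        funext h; rw [mop_mul]
      rw [heq]
      exact continuous_const.mul (hIcont (g * g'))
    have hint3cont : Continuous fun h => Dmap σ S g (g' * h) * Vmap S (g' * h) * S g' := by
      have hmulc : Continuous fun h : K => g' * h := continuous_const.mul continuous_id
      exact (((hIcont g).comp hmulc)).mul continuous_const
    have hint3 : Integrable (fun h => Dmap σ S g (g' * h) * Vmap S (g' * h) * S g') μ :=
      integrable_cont μ hint3cont
    have hint2 : Integrable (fun h => S g * (Dmap σ S g' h * Vmap S h)) μ :=
      integrable_cont μ (continuous_const.mul (hIcont g'))
    -- assemble into a single integral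
    have hcomb : Dmap σ S g g' + σ g g' • e (g * g') - e g * S g' - S g * e g'
        = ∫ h, (σ g g' • (Dmap σ S (g * g') h * Vmap S h)
            - Dmap σ S g (g' * h) * Vmap S (g' * h) * S g'
            - S g * (Dmap σ S g' h * Vmap S h) + Dmap σ S g g') ∂μ := by
      rw [hB1, hB2, hB3]
      have hint13 : Integrable (fun h => σ g g' • (Dmap σ S (g * g') h * Vmap S h)
          - Dmap σ S g (g' * h) * Vmap S (g' * h) * S g') μ := hint1.sub hint3
      have hint123 : Integrable (fun h => σ g g' • (Dmap σ S (g * g') h * Vmap S h)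
          - Dmap σ S g (g' * h) * Vmap S (g' * h) * S g'
          - S g * (Dmap σ S g' h * Vmap S h)) μ := hint13.sub hint2
      rw [integral_add hint123 (integrable_const _), integral_sub hint13 hint2,
        integral_sub hint1 hint3, integral_const' μ _]
      abel
    -- apply the pointwise identity
    have hptw : ∀ h, (σ g g' • (Dmap σ S (g * g') h * Vmap S h)
            - Dmap σ S g (g' * h) * Vmap S (g' * h) * S g'
            - S g * (Dmap σ S g' h * Vmap S h) + Dmap σ S g g')
        = Dmap σ S g (g' * h) * Vmap S (g' * h) * (Dmap σ S g' h * Vmap S h) := fun h =>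
      pw_identity act σ hact_one hact_mul hσ_central hσ_cocycle hS hu g g' h
    have hfinal : σ g g' • Phi μ σ S (g * g') - Phi μ σ S g * Phi μ σ S g'
        = (∫ h, Dmap σ S g (g' * h) * Vmap S (g' * h) * (Dmap σ S g' h * Vmap S h) ∂μ)
          - e g * e g' := by
      rw [hexp]
      have : Dmap σ S g g' + σ g g' • e (g * g') - e g * S g' - S g * e g' - e g * e g'
          = (Dmap σ S g g' + σ g g' • e (g * g') - e g * S g' - S g * e g') - e g * e g' := by
        abel
      rw [this, hcomb, integral_congr_ae (Filter.Eventually.of_forall hptw)]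
    -- norm estimate
    rw [hfinal]
    have hq1 : ‖∫ h, Dmap σ S g (g' * h) * Vmap S (g' * h) * (Dmap σ S g' h * Vmap S h) ∂μ‖
        ≤ ρ / ell σ g * B * (ρ * B) := by
      refine norm_integral_le' μ (fun h => ?_)
      refine le_trans (norm_mul_le _ _) ?_
      refine mul_le_mul ?_ ?_ (norm_nonneg _)
        (mul_nonneg (div_nonneg hρ0 (le_of_lt (ell_pos σ g))) hB0)
      · exact le_trans (norm_mul_le _ _)
          (mul_le_mul (hDnorm g (g' * h)) (hVnorm (g' * h)) (norm_nonneg _)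
            (div_nonneg hρ0 (le_of_lt (ell_pos σ g))))
      · exact le_trans (norm_mul_le _ _)
          (mul_le_mul (hDnorm' g' h) (hVnorm h) (norm_nonneg _) hρ0)
    have hq2 : ‖e g * e g'‖ ≤ ρ / ell σ g * B * (ρ * B) := by
      refine le_trans (norm_mul_le _ _) ?_
      exact mul_le_mul (he_norm g) (he_norm' g') (norm_nonneg _)
        (mul_nonneg (div_nonneg hρ0 (le_of_lt (ell_pos σ g))) hB0)
    calc ell σ g * ‖(∫ h, Dmap σ S g (g' * h) * Vmap S (g' * h) * (Dmap σ S g' h * Vmap S h) ∂μ)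
          - e g * e g'‖
        ≤ ell σ g * (ρ / ell σ g * B * (ρ * B) + ρ / ell σ g * B * (ρ * B)) := by
          refine mul_le_mul_of_nonneg_left ?_ (le_of_lt (ell_pos σ g))
          exact le_trans (norm_sub_le _ _) (add_le_add hq1 hq2)
    _ = 2 * B^2 * ρ^2 := by
        have hl : ell σ g ≠ 0 := ne_of_gt (ell_pos σ g)
        field_simp
        ring
  exact ⟨hPhiCont, hPhiSemi, hPhi1, hPhib, hPhid, hPhidist⟩

end Step


section Iter

variable [TopologicalSpace K] [IsTopologicalGroup K] [T2Space K]
    [CompactSpace K] [MeasurableSpace K] [BorelSpace K]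
    (μ : Measure K) [μ.IsHaarMeasure] [IsProbabilityMeasure μ]

/-- iterated averaging -/
noncomputable def iter (σ : K → K → A) (T : K → X) : ℕ → K → X
  | 0 => T
  | (n+1) => Phi μ σ (iter σ T n)

@[simp] theorem iter_zero (σ : K → K → A) (T : K → X) : iter μ σ T 0 = T := rfl

@[simp] theorem iter_succ (σ : K → K → A) (T : K → X) (n : ℕ) :
    iter μ σ T (n+1) = Phi μ σ (iter μ σ T n) := rfl

end Iter

end AlmostRep

open AlmostRep in
/-- Almost representation theorem, compact group case: any operator-norm continuous
almost σ-representation `T` of a compact group `K` on a Banach `A`-module `E` lies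
within a distance of `4·b(T)·r(T)` from an actual operator-norm continuous
σ-representation `R` of `K` on `E`. -/
theorem almost_representation_theorem
    {K A E : Type*} [Group K] [TopologicalSpace K] [IsTopologicalGroup K] [T2Space K]
    [CompactSpace K] [MeasurableSpace K] [BorelSpace K]
    (μ : Measure K) [μ.IsHaarMeasure] [IsProbabilityMeasure μ]
    -- `A` is a unital real Banach algebra
    [NormedRing A] [NormedAlgebra ℝ A] [CompleteSpace A] [NormOneClass A]
    -- `E` is a real Banach space which is an `A`-module
    [NormedAddCommGroup E] [NormedSpace ℝ E] [CompleteSpace E]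
    [Module A E] [SMulCommClass ℝ A E] [ContinuousConstSMul A E]
    (hAE : ∀ (a : A) (e : E), ‖a • e‖ ≤ ‖a‖ * ‖e‖)
    -- the action of `K` on `A` by unital isometric algebra automorphisms
    (act : K → A → A)
    (hact_one : ∀ a, act 1 a = a)
    (hact_mul : ∀ g h a, act (g * h) a = act g (act h a))
    (hact_add : ∀ g a b, act g (a + b) = act g a + act g b)
    (hact_mul' : ∀ g a b, act g (a * b) = act g a * act g b)
    (hact_smul : ∀ g (r : ℝ) (a : A), act g (r • a) = r • act g a)
    (hact_unital : ∀ g, act g 1 = 1)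
    (hact_isom : ∀ g a, ‖act g a‖ = ‖a‖)
    (hact_cont : Continuous fun p : K × A => act p.1 p.2)
    -- `σ` is an `A`-valued multiplier for `K`
    (σ : K → K → A)
    (hσ_cont : Continuous fun p : K × K => σ p.1 p.2)
    (hσ_unit : ∀ g h, IsUnit (σ g h))
    (hσ_central : ∀ g h a, σ g h * a = a * σ g h)
    (hσ_normal₁ : ∀ h, σ 1 h = 1)
    (hσ_normal₂ : ∀ g, σ g 1 = 1)
    (hσ_cocycle : ∀ g h k, σ g h * σ (g * h) k = act g (σ h k) * σ g (h * k))
    -- `T` is an operator-norm continuous `A`-semilinear pseudorepresentation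
    (T : K → E →L[ℝ] E)
    (hT_cont : Continuous T)
    (hT_semilinear : ∀ g (a : A) (e : E), T g (a • e) = act g a • T g e)
    -- the σ-bound is finite and the σ-defect is finite
    (hb_fin : BddAbove (Set.range fun g : K => ell σ g * ‖T g‖))
    (hr_fin : BddAbove (Set.range fun p : K × K =>
      ell σ p.1 * ‖σ p.1 p.2 • T (p.1 * p.2) - (T p.1).comp (T p.2)‖))
    -- `T` is an almost σ-representation
    (h_almost : sigmaDefect σ T ≤ min (1 / 4) (1 / (9 * (sigmaBound σ T) ^ 2))) :
    ∃ R : K → E →L[ℝ] E,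
      Continuous R ∧
      (∀ g (a : A) (e : E), R g (a • e) = act g a • R g e) ∧
      R 1 = 1 ∧
      (∀ g h : K, σ g h • R (g * h) = (R g).comp (R h)) ∧
      (∀ g : K, IsUnit (R g)) ∧
      ∀ g : K, ‖R g - T g‖ ≤ 4 * sigmaBound σ T * sigmaDefect σ T := by
  classical
  -- nonnegativity of the bound and defect
  have hb_nonneg : 0 ≤ sigmaBound σ T :=
    Real.iSup_nonneg fun g => mul_nonneg (le_of_lt (ell_pos σ g)) (norm_nonneg _)
  have hsup_nonneg : 0 ≤ ⨆ p : K × K,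
      ell σ p.1 * ‖σ p.1 p.2 • T (p.1 * p.2) - (T p.1).comp (T p.2)‖ :=
    Real.iSup_nonneg fun p => mul_nonneg (le_of_lt (ell_pos σ p.1)) (norm_nonneg _)
  have hr_nonneg : 0 ≤ sigmaDefect σ T := add_nonneg (norm_nonneg _) hsup_nonneg
  by_cases htriv : Subsingleton E
  · -- trivial module
    refine ⟨fun _ => 1, continuous_const, ?_, rfl, ?_, fun g => isUnit_one, ?_⟩
    · intro g a e
      exact Subsingleton.elim _ _
    · intro g h
      ext e
      exact Subsingleton.elim _ _
    · intro g
      have hz : (1 : E →L[ℝ] E) - T g = 0 := by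
        ext e; exact Subsingleton.elim _ _
      rw [hz, norm_zero]
      exact mul_nonneg (mul_nonneg (by norm_num) hb_nonneg) hr_nonneg
  haveI hNT : Nontrivial E := not_subsingleton_iff_nontrivial.mp htriv
  -- notation
  set b : ℝ := sigmaBound σ T with hbdef
  set r : ℝ := sigmaDefect σ T with hrdef
  set d : ℝ := ‖(1 : E →L[ℝ] E) - T 1‖ with hddef
  -- pointwise bounds
  have hb_pt : ∀ g, ell σ g * ‖T g‖ ≤ b := fun g => le_ciSup hb_fin g
  have hrsum : r = d + ⨆ p : K × K,
      ell σ p.1 * ‖σ p.1 p.2 • T (p.1 * p.2) - (T p.1).comp (T p.2)‖ := rfl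
  have hd_pt : ∀ g h, ell σ g * ‖σ g h • T (g * h) - T g * T h‖ ≤ r - d := by
    intro g h
    have h1 := le_ciSup hr_fin (g, h)
    rw [← ContinuousLinearMap.mul_def] at h1
    rw [hrsum]
    simpa using h1
  -- basic numeric facts
  have hd0 : (0:ℝ) ≤ d := norm_nonneg _
  have hdr : d ≤ r := by rw [hrsum]; linarith
  have hr0 : (0:ℝ) ≤ r := hr_nonneg
  have hr14 : r ≤ 1/4 := le_trans h_almost (by norm_num [min_le_left])
  have hnorm1 : ‖(1 : E →L[ℝ] E)‖ = 1 := norm_one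
  have hT1 : 1 - r ≤ ‖T 1‖ := by
    have h2 := norm_add_le ((1 : E →L[ℝ] E) - T 1) (T 1)
    rw [sub_add_cancel, hnorm1] at h2
    have : ‖(1 : E →L[ℝ] E) - T 1‖ = d := rfl
    linarith [h2, hdr]
  have hell1 : ell σ 1 = 1 := by
    rw [ell, inv_one, hσ_normal₁ 1, Ring.inverse_one, norm_one, max_self]
  have hb34 : (3:ℝ)/4 ≤ b := by
    have h3 := hb_pt 1
    rw [hell1, one_mul] at h3
    linarith
  have hb0 : (0:ℝ) < b := by linarith
  have hb2r : b^2 * r ≤ 1/9 := by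
    have h4 : r ≤ 1 / (9 * b^2) := le_trans h_almost (min_le_right _ _)
    rw [le_div_iff₀ (by positivity)] at h4
    nlinarith
  have hbr0 : (0:ℝ) ≤ b * r := mul_nonneg (le_of_lt hb0) hr0
  -- the numerical sequences
  set R1 : ℝ := 32/9*b^2*r^2 with hR1def
  set C : ℝ := 9/4*b*R1 with hCdef
  set P : ℕ → ℝ := fun n => R1 * (1/2)^n with hPdef
  set Bn : ℕ → ℝ := fun n => 4/3*b + 9/2*b*R1*(1 - (1/2)^n) with hBndef
  have hR10 : (0:ℝ) ≤ R1 := by rw [hR1def]; positivity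
  have hR1le : R1 ≤ 8/81 := by
    have h5 : b^2*r*r ≤ 1/9*(1/4) := mul_le_mul hb2r hr14 hr0 (by norm_num)
    rw [hR1def]; nlinarith
  have hu1 : ∀ n : ℕ, ((1:ℝ)/2)^n ≤ 1 := fun n => pow_le_one₀ (by norm_num) (by norm_num)
  have hu0 : ∀ n : ℕ, (0:ℝ) ≤ ((1:ℝ)/2)^n := fun n => pow_nonneg (by norm_num) n
  have hPn0 : ∀ n, 0 ≤ P n := fun n => mul_nonneg hR10 (hu0 n)
  have hPnle : ∀ n, P n ≤ 8/81 := fun n => by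
    simp only [hPdef]
    calc R1 * (1/2)^n ≤ R1 * 1 := mul_le_mul_of_nonneg_left (hu1 n) hR10
    _ = R1 := mul_one _
    _ ≤ 8/81 := hR1le
  have hPn1 : ∀ n, (0:ℝ) + P n < 1 := fun n => by
    rw [zero_add]; linarith [hPnle n]
  have hBn0 : ∀ n, 0 ≤ Bn n := fun n => by
    simp only [hBndef]
    have h1 : (0:ℝ) ≤ 9/2*b*R1*(1 - (1/2)^n) :=
      mul_nonneg (mul_nonneg (mul_nonneg (by norm_num) (le_of_lt hb0)) hR10)
        (by linarith [hu1 n])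
    nlinarith
  have hBnle : ∀ n, Bn n ≤ 16/9*b := fun n => by
    simp only [hBndef]
    have h6 : 9/2*b*R1*(1 - (1/2)^n) ≤ 9/2*b*R1 := by
      have h7 : (0:ℝ) ≤ 9/2*b*R1 := by positivity
      nlinarith [hu0 n]
    nlinarith [hR1le, hb0]
  have hBle : ∀ n, Bn n / (1 - (0 + P n)) ≤ 9/4*b := fun n => by
    rw [zero_add, div_le_iff₀ (by linarith [hPnle n] : (0:ℝ) < 1 - P n)]
    have hbP : b * P n ≤ b * (8/81) := mul_le_mul_of_nonneg_left (hPnle n) (le_of_lt hb0)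
    have := hBnle n
    nlinarith [hPn0 n]
  -- the base step : apply `step` to `T`
  have hTsemi : ∀ g, SemiLin (act g) (T g) := fun g a e => hT_semilinear g a e
  have hrd0 : (0:ℝ) ≤ r - d := by linarith
  have hsum : d + (r - d) = r := by ring
  have hbase := step act σ μ hAE hact_one hact_mul hσ_cont hσ_unit hσ_central hσ_normal₁
    hσ_cocycle T b (r - d) d hT_cont hTsemi hb_pt hd_pt (le_refl d) hrd0 hd0
    (by rw [hsum]; linarith)
  rw [hsum] at hbase
  obtain ⟨bc1, bc2, bc3, bc4, bc5, bc6⟩ := hbase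
  have h1r : (0:ℝ) < 1 - r := by linarith
  have hq : b/(1-r) ≤ 4/3*b := by
    rw [div_le_iff₀ h1r]
    nlinarith
  have hdiv0 : (0:ℝ) ≤ b/(1-r) := div_nonneg (le_of_lt hb0) (le_of_lt h1r)
  have hrdb : (r - d) * (b/(1-r)) ≤ r * (4/3*b) :=
    mul_le_mul (by linarith) hq hdiv0 hr0
  -- the tower of iterates
  have Good : ∀ n, Continuous (iter μ σ T (n+1)) ∧
      (∀ g, SemiLin (act g) (iter μ σ T (n+1) g)) ∧
      iter μ σ T (n+1) 1 = 1 ∧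
      (∀ g, ell σ g * ‖iter μ σ T (n+1) g‖ ≤ Bn n) ∧
      (∀ g h, ell σ g * ‖σ g h • iter μ σ T (n+1) (g*h)
        - iter μ σ T (n+1) g * iter μ σ T (n+1) h‖ ≤ P n) := by
    intro n
    induction n with
    | zero =>
      refine ⟨bc1, bc2, bc3, fun g => le_trans (bc4 g) ?_, fun g h => le_trans (bc5 g h) ?_⟩
      · simp only [hBndef, pow_zero]
        nlinarith
      · simp only [hPdef, pow_zero, mul_one, hR1def]
        have h8 : (b/(1-r))^2 ≤ (4/3*b)^2 := pow_le_pow_left₀ hdiv0 hq 2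
        have h9 : (r-d)^2 ≤ r^2 := pow_le_pow_left₀ hrd0 (by linarith) 2
        nlinarith [mul_le_mul h8 h9 (pow_nonneg hrd0 2) (by positivity : (0:ℝ) ≤ (4/3*b)^2)]
    | succ n ih =>
      obtain ⟨gc, gs, g1, gb, gd⟩ := ih
      have hst := step act σ μ hAE hact_one hact_mul hσ_cont hσ_unit hσ_central hσ_normal₁
        hσ_cocycle (iter μ σ T (n+1)) (Bn n) (P n) 0 gc gs gb gd
        (by rw [g1, sub_self, norm_zero]) (hPn0 n) (le_refl 0) (hPn1 n)
      obtain ⟨c1, c2, c3, c4, c5, c6⟩ := hst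
      have hd1 : P n * (Bn n/(1-(0 + P n))) ≤ P n * (9/4*b) :=
        mul_le_mul_of_nonneg_left (hBle n) (hPn0 n)
      have hBneq : Bn n + P n * (9/4*b) = Bn (n+1) := by
        simp only [hBndef, hPdef, pow_succ]
        ring
      refine ⟨c1, c2, c3, fun g => le_trans (c4 g) ?_, fun g h => le_trans (c5 g h) ?_⟩
      · linarith
      · -- defect contraction
        have hPR : P n ≤ R1 := by
          simp only [hPdef]
          calc R1 * (1/2)^n ≤ R1 * 1 := mul_le_mul_of_nonneg_left (hu1 n) hR10
          _ = R1 := mul_one _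
        have hkey : (81:ℝ)/8*b^2*(P n) ≤ 4/9 := by
          have hA : (81:ℝ)/8*b^2*(P n) ≤ 81/8*b^2*R1 :=
            mul_le_mul_of_nonneg_left hPR (by positivity)
          have hB : (81:ℝ)/8*b^2*R1 = 36*((b^2*r)*(b^2*r)) := by
            simp only [hR1def]; ring
          have hC : (b^2*r)*(b^2*r) ≤ (1/9)*(1/9) :=
            mul_self_le_mul_self (by positivity) hb2r
          rw [hB] at hA
          linarith
        set x := Bn n/(1-(0 + P n)) with hxdef
        have hx0 : (0:ℝ) ≤ x := by
          rw [hxdef]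
          exact div_nonneg (hBn0 n) (by linarith [hPn1 n])
        have h8 : x^2 ≤ (9/4*b)^2 := pow_le_pow_left₀ hx0 (hBle n) 2
        have h9 : 2*x^2*(P n)^2 ≤ 2*((9/4*b)^2)*(P n)^2 := by
          nlinarith [sq_nonneg (P n)]
        have h10 : 2*(((9:ℝ)/4*b)^2)*(P n)^2 = ((81:ℝ)/8*b^2*(P n))*(P n) := by ring
        have h11 : ((81:ℝ)/8*b^2*(P n))*(P n) ≤ (1/2)*(P n) :=
          mul_le_mul_of_nonneg_right (by linarith) (hPn0 n)
        have h12 : ((1:ℝ)/2)*(P n) = P (n+1) := by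
          simp only [hPdef, pow_succ]
          ring
        linarith
  -- distances between consecutive iterates
  have hC0 : (0:ℝ) ≤ C := by rw [hCdef]; positivity
  have hdistn : ∀ n g, ‖iter μ σ T (n+2) g - iter μ σ T (n+1) g‖ ≤ C * (1/2)^n := by
    intro n g
    obtain ⟨gc, gs, g1, gb, gd⟩ := Good n
    have hst := step act σ μ hAE hact_one hact_mul hσ_cont hσ_unit hσ_central hσ_normal₁
      hσ_cocycle (iter μ σ T (n+1)) (Bn n) (P n) 0 gc gs gb gd
      (by rw [g1, sub_self, norm_zero]) (hPn0 n) (le_refl 0) (hPn1 n)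
    have hd2 := hst.2.2.2.2.2 g
    have hd3 : ‖iter μ σ T (n+2) g - iter μ σ T (n+1) g‖ ≤
        ell σ g * ‖iter μ σ T (n+2) g - iter μ σ T (n+1) g‖ :=
      le_mul_of_one_le_left (norm_nonneg _) (one_le_ell σ g)
    have hd4 : P n * (Bn n/(1-(0 + P n))) ≤ P n * (9/4*b) :=
      mul_le_mul_of_nonneg_left (hBle n) (hPn0 n)
    have hd5 : P n * (9/4*b) = C * (1/2)^n := by
      simp only [hPdef, hCdef]; ring
    calc ‖iter μ σ T (n+2) g - iter μ σ T (n+1) g‖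
        ≤ ell σ g * ‖iter μ σ T (n+2) g - iter μ σ T (n+1) g‖ := hd3
    _ ≤ P n * (Bn n/(1-(0 + P n))) := hd2
    _ ≤ C * (1/2)^n := by linarith
  -- convergence
  have hfd : ∀ g n, dist (iter μ σ T (n+1) g) (iter μ σ T (n+2) g) ≤ C * (1/2)^n := by
    intro g n
    rw [dist_eq_norm, norm_sub_rev]
    exact hdistn n g
  have hex : ∀ g, ∃ L, Filter.Tendsto (fun n => iter μ σ T (n+1) g) Filter.atTop (nhds L) :=
    fun g => cauchySeq_tendsto_of_complete
      (cauchySeq_of_le_geometric (1/2) C (by norm_num) (hfd g))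
  choose R hR using hex
  have htail : ∀ g n, dist (iter μ σ T (n+1) g) (R g) ≤ C * (1/2)^n / (1 - 1/2) :=
    fun g n => dist_le_of_le_geometric_of_tendsto (1/2) C (by norm_num) (hfd g) (hR g) n
  have htail' : ∀ g n, dist (iter μ σ T (n+1) g) (R g) ≤ 2 * C * (1/2)^n := by
    intro g n
    have := htail g n
    have heq : C * (1/2:ℝ)^n / (1 - 1/2) = 2 * C * (1/2)^n := by
      norm_num; ring
    linarith [heq ▸ this]
  -- uniform convergence and continuity
  have hgeo0 : Filter.Tendsto (fun n : ℕ => 2 * C * (1/2:ℝ)^n) Filter.atTop (nhds 0) := by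
    have h13 := (tendsto_pow_atTop_nhds_zero_of_lt_one (by norm_num : (0:ℝ) ≤ 1/2)
      (by norm_num : (1:ℝ)/2 < 1)).const_mul (2 * C)
    simpa using h13
  have hunif : TendstoUniformly (fun n g => iter μ σ T (n+1) g) R Filter.atTop := by
    rw [Metric.tendstoUniformly_iff]
    intro ε hε
    filter_upwards [hgeo0.eventually (gt_mem_nhds hε)] with n hn g
    rw [dist_comm]
    exact lt_of_le_of_lt (htail' g n) hn
  have hRcont : Continuous R :=
    hunif.continuous (Filter.Eventually.of_forall fun n => (Good n).1).frequently
  -- R 1 = 1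
  have hR1id : R 1 = 1 := by
    have h14 : (fun n => iter μ σ T (n+1) 1) = fun _ : ℕ => (1 : E →L[ℝ] E) :=
      funext fun n => (Good n).2.2.1
    have h15 := hR 1
    rw [h14] at h15
    exact tendsto_nhds_unique h15 tendsto_const_nhds
  -- semilinearity of R
  have hRsemi : ∀ g (a : A) (e : E), R g (a • e) = act g a • R g e := by
    intro g a e
    have h16 : Filter.Tendsto (fun n => iter μ σ T (n+1) g (a • e)) Filter.atTop
        (nhds (R g (a • e))) :=
      ((ContinuousLinearMap.apply ℝ E (a • e)).continuous.tendsto (R g)).comp (hR g)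
    have h17 : (fun n => iter μ σ T (n+1) g (a • e))
        = fun n => act g a • (iter μ σ T (n+1) g e) :=
      funext fun n => (Good n).2.1 g a e
    have h18 : Filter.Tendsto (fun n => act g a • (iter μ σ T (n+1) g e)) Filter.atTop
        (nhds (act g a • R g e)) :=
      (((ContinuousLinearMap.apply ℝ E e).continuous.tendsto (R g)).comp (hR g)).const_smul
        (act g a)
    rw [h17] at h16
    exact tendsto_nhds_unique h16 h18
  -- multiplicativity of R
  have hRmul : ∀ g h, σ g h • R (g * h) = R g * R h := by
    intro g h
    have h19 : Filter.Tendsto (fun n => mop E (σ g h) * iter μ σ T (n+1) (g*h)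
        - iter μ σ T (n+1) g * iter μ σ T (n+1) h) Filter.atTop
        (nhds (mop E (σ g h) * R (g*h) - R g * R h)) :=
      (Filter.Tendsto.mul tendsto_const_nhds (hR (g*h))).sub ((hR g).mul (hR h))
    have h20 : Filter.Tendsto (fun n => mop E (σ g h) * iter μ σ T (n+1) (g*h)
        - iter μ σ T (n+1) g * iter μ σ T (n+1) h) Filter.atTop (nhds 0) := by
      have hbound : ∀ n : ℕ, ‖mop E (σ g h) * iter μ σ T (n+1) (g*h)
          - iter μ σ T (n+1) g * iter μ σ T (n+1) h‖ ≤ R1 * (1/2:ℝ)^n := by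
        intro n
        rw [mop_mul]
        have h21 := (Good n).2.2.2.2 g h
        have h22 : ‖σ g h • iter μ σ T (n+1) (g*h)
            - iter μ σ T (n+1) g * iter μ σ T (n+1) h‖
            ≤ ell σ g * ‖σ g h • iter μ σ T (n+1) (g*h)
            - iter μ σ T (n+1) g * iter μ σ T (n+1) h‖ :=
          le_mul_of_one_le_left (norm_nonneg _) (one_le_ell σ g)
        simp only [hPdef] at h21
        linarith
      have h23 : Filter.Tendsto (fun n : ℕ => R1 * (1/2:ℝ)^n) Filter.atTop (nhds 0) := by
        have := (tendsto_pow_atTop_nhds_zero_of_lt_one (by norm_num : (0:ℝ) ≤ 1/2)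
          (by norm_num : (1:ℝ)/2 < 1)).const_mul R1
        simpa using this
      exact squeeze_zero_norm hbound h23
    have h24 := tendsto_nhds_unique h19 h20
    have h25 : mop E (σ g h) * R (g*h) = R g * R h := sub_eq_zero.mp h24
    rw [← h25, mop_mul]
  -- invertibility of R
  have hRunit : ∀ g, IsUnit (R g) := by
    intro g
    have hgg : R g * R g⁻¹ = mop E (σ g g⁻¹) := by
      have h26 := hRmul g g⁻¹
      rw [mul_inv_cancel, hR1id] at h26
      rw [← h26, mop]
    have hgg' : R g⁻¹ * R g = mop E (σ g⁻¹ g) := by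
      have h27 := hRmul g⁻¹ g
      rw [inv_mul_cancel, hR1id] at h27
      rw [← h27, mop]
    set c : E →L[ℝ] E := R g⁻¹ * mop E (Ring.inverse (σ g g⁻¹)) with hcdef
    have hSc : R g * c = 1 := by
      rw [hcdef, ← mul_assoc, hgg, mop_mul_mop,
        Ring.mul_inverse_cancel _ (hσ_unit g g⁻¹), mop_one]
    set dd : E →L[ℝ] E := mop E (Ring.inverse (σ g⁻¹ g)) * R g⁻¹ with hdddef
    have hdS : dd * R g = 1 := by
      rw [hdddef, mul_assoc, hgg', mop_mul_mop,
        Ring.inverse_mul_cancel _ (hσ_unit g⁻¹ g), mop_one]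
    have hdc : dd = c := by
      calc dd = dd * (R g * c) := by rw [hSc, mul_one]
      _ = (dd * R g) * c := (mul_assoc dd (R g) c).symm
      _ = c := by rw [hdS, one_mul]
    exact ⟨⟨R g, c, hSc, by rw [← hdc]; exact hdS⟩, rfl⟩
  -- distance estimate
  have hRdist : ∀ g, ‖R g - T g‖ ≤ 4 * b * r := by
    intro g
    have h28 : ‖iter μ σ T 1 g - T g‖ ≤ r * (4/3*b) := by
      have h29 := bc6 g
      have h30 : ‖Phi μ σ T g - T g‖ ≤ ell σ g * ‖Phi μ σ T g - T g‖ :=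
        le_mul_of_one_le_left (norm_nonneg _) (one_le_ell σ g)
      have h31 : iter μ σ T 1 g = Phi μ σ T g := rfl
      rw [h31]
      linarith
    have h32 : ‖R g - iter μ σ T 1 g‖ ≤ 2 * C := by
      have h33 := htail' g 0
      rw [dist_comm, dist_eq_norm] at h33
      simpa using h33
    have h34 : ‖R g - T g‖ ≤ ‖R g - iter μ σ T 1 g‖ + ‖iter μ σ T 1 g - T g‖ := by
      have := norm_add_le (R g - iter μ σ T 1 g) (iter μ σ T 1 g - T g)
      simpa using this
    have h35 : (2:ℝ) * C = 16*b^3*r^2 := by simp only [hCdef, hR1def]; ring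
    have h36 : 16*b^3*r^2 ≤ 16/9*(b*r) := by
      have h37 : (b^2*r)*(b*r) ≤ (1/9)*(b*r) := mul_le_mul_of_nonneg_right hb2r hbr0
      have h38 : 16*b^3*r^2 = 16*((b^2*r)*(b*r)) := by ring
      have h39 : (16:ℝ)/9*(b*r) = 16*((1/9)*(b*r)) := by ring
      rw [h38, h39]
      linarith
    linarith
  refine ⟨R, hRcont, hRsemi, hR1id, ?_, hRunit, hRdist⟩
  intro g h
  rw [← ContinuousLinearMap.mul_def]
  exact hRmul g h
end

section
/- Almost representation theorem for compact groups on Banach spaces (the de la Harpe–Karoubi-type special case explicitly claimed by the paper): let K be a compact Hausdorff topological group, E a complex Banach space, and T : K → L(E) a map continuous for the operator norm. Put b = sup_{g∈K} ‖T(g)‖ and r = ‖id − T(1)‖ + sup_{g,h∈K} ‖T(gh) − T(g)∘T(h)‖, and assume r ≤ min{1/4, 1/(9·b²)}. Then there exists an operator-norm continuous map R : K → L(E) with R(1) = id and R(gh) = R(g)∘R(h) for all g,h ∈ K (so each R(g) is invertible and R is a continuous representation of K by bounded automorphisms of E), such that ‖R(g) − T(g)‖ ≤ 4·b·r for all g ∈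 K. -/
open MeasureTheory

set_option linter.unusedSectionVars false
set_option maxHeartbeats 1000000

section AlmostRepHelpers

variable {K : Type*} [Group K] [TopologicalSpace K] [IsTopologicalGroup K] [T2Space K]
    [CompactSpace K] [MeasurableSpace K] [BorelSpace K]
variable {A : Type*} [NormedRing A] [NormedAlgebra ℝ A] [CompleteSpace A]

lemma almostRep_contSM {f : K → A} (hf : Continuous f) : StronglyMeasurable f := by
  borelize A
  exact stronglyMeasurable_iff_measurable_separable.2
    ⟨hf.measurable, (isCompact_range hf).isSeparable⟩

variable (μ : Measure K) [IsProbabilityMeasure μ] [μ.IsMulLeftInvariant]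

lemma almostRep_contInt {f : K → A} (hf : Continuous f) : Integrable f μ := by
  obtain ⟨C, hC⟩ := (isCompact_range hf).isBounded.exists_norm_le
  exact ⟨(almostRep_contSM hf).aestronglyMeasurable,
    HasFiniteIntegral.of_bounded (C := C) (Filter.Eventually.of_forall fun x => hC _ ⟨x, rfl⟩)⟩

lemma almostRep_normIntLe {f : K → A} {M : ℝ} (hb : ∀ h, ‖f h‖ ≤ M) : ‖∫ h, f h ∂μ‖ ≤ M := by
  simpa using norm_integral_le_of_norm_le_const (μ := μ) (Filter.Eventually.of_forall hb)

lemma almostRep_intLip : LipschitzWith 1 (fun φ : C(K, A) => ∫ h, φ h ∂μ) := by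
  apply LipschitzWith.of_dist_le_mul
  intro φ ψ
  rw [NNReal.coe_one, one_mul, dist_eq_norm, dist_eq_norm,
    ← integral_sub (almostRep_contInt μ φ.continuous) (almostRep_contInt μ ψ.continuous)]
  exact almostRep_normIntLe μ fun h => by simpa using (φ - ψ).norm_coe_le_norm h

lemma almostRep_contParamInt (f : K × K → A) (hf : Continuous f) :
    Continuous (fun g => ∫ h, f (g, h) ∂μ) := by
  have h : (fun g => ∫ h, f (g, h) ∂μ)
      = (fun φ : C(K, A) => ∫ h, φ h ∂μ) ∘ (ContinuousMap.curry ⟨f, hf⟩) := rfl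
  rw [h]
  exact (almostRep_intLip μ).continuous.comp (ContinuousMap.curry ⟨f, hf⟩).continuous

lemma almostRep_intMulConst {f : K → A} (hf : Integrable f μ) (a : A) :
    ∫ h, f h * a ∂μ = (∫ h, f h ∂μ) * a :=
  ((ContinuousLinearMap.mul ℝ A).flip a).integral_comp_comm hf

lemma almostRep_constMulInt {f : K → A} (hf : Integrable f μ) (a : A) :
    ∫ h, a * f h ∂μ = a * (∫ h, f h ∂μ) :=
  (ContinuousLinearMap.mul ℝ A a).integral_comp_comm hf

lemma almostRep_intInv (f : K → A) (g : K) : ∫ h, f (g * h) ∂μ = ∫ h, f h ∂μ :=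
  integral_mul_left_eq_self f g

lemma almostRep_intConst (a : A) : ∫ _ : K, a ∂μ = a := by simp

/-- One averaging step of the Newton-type iteration. -/
noncomputable def nextMap (S : K → A) : K → A :=
  fun g => ∫ h, S (g * h) * Ring.inverse (S h) ∂μ

variable [NormOneClass A]

lemma almostRep_step (S : K → A) (c e : ℝ) (hcont : Continuous S)
    (hunit : ∀ g, IsUnit (S g))
    (hinv : ∀ g, ‖Ring.inverse (S g)‖ ≤ c)
    (hdef : ∀ g h, ‖S g * S h - S (g * h)‖ ≤ e)
    (he : 0 ≤ e) (hsmall : c ^ 2 * e ≤ 1 / 5) :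
    Continuous (nextMap μ S)
    ∧ (∀ g, ‖nextMap μ S g - S g‖ ≤ c * e)
    ∧ (∀ g h, ‖nextMap μ S g * nextMap μ S h - nextMap μ S (g * h)‖ ≤ 2 * c ^ 2 * e ^ 2)
    ∧ (∀ g, IsUnit (nextMap μ S g))
    ∧ (∀ g, ‖Ring.inverse (nextMap μ S g)‖ ≤ c / (1 - c ^ 2 * e)) := by
  have hc0 : (0 : ℝ) ≤ c := le_trans (norm_nonneg _) (hinv 1)
  set I : K → A := fun h => Ring.inverse (S h) with hI
  have hIcont : Continuous I := by
    rw [continuous_iff_continuousAt]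
    intro g
    have h1 : ContinuousAt Ring.inverse (S g) := by
      have := NormedRing.inverse_continuousAt (hunit g).unit
      rwa [(hunit g).unit_spec] at this
    exact h1.comp hcont.continuousAt
  have hSI : ∀ g, S g * I g = 1 := fun g => Ring.mul_inverse_cancel _ (hunit g)
  have hIS : ∀ g, I g * S g = 1 := fun g => Ring.inverse_mul_cancel _ (hunit g)
  have hIb : ∀ g, ‖I g‖ ≤ c := hinv
  have hDi : ∀ g h, ‖S (g * h) * I h - S g‖ ≤ e * c := by
    intro g h
    have key : S (g * h) * I h - S g = (S (g * h) - S g * S h) * I h := by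
      rw [sub_mul, mul_assoc, hSI, mul_one]
    rw [key]
    calc ‖(S (g * h) - S g * S h) * I h‖ ≤ ‖S (g * h) - S g * S h‖ * ‖I h‖ := norm_mul_le _ _
      _ ≤ e * c := by
          refine mul_le_mul ?_ (hIb h) (norm_nonneg _) he
          rw [← norm_neg]; simpa using hdef g h
  set S' : K → A := nextMap μ S with hS'
  have hS'def : ∀ g, S' g = ∫ h, S (g * h) * I h ∂μ := fun g => rfl
  have hintg : ∀ g, Integrable (fun h => S (g * h) * I h) μ := fun g =>
    almostRep_contInt μ (((hcont.comp (continuous_mul_left g))).mul hIcont)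
  have hdist : ∀ g, ‖S' g - S g‖ ≤ c * e := by
    intro g
    have heq : S' g - S g = ∫ h, (S (g * h) * I h - S g) ∂μ := by
      rw [integral_sub (hintg g) (integrable_const _), almostRep_intConst, hS'def]
    rw [heq]
    have := almostRep_normIntLe μ (f := fun h => S (g * h) * I h - S g) (M := e * c) (hDi g)
    linarith
  have hcont' : Continuous S' := by
    have h : S' = fun g => ∫ h, (fun p : K × K => S (p.1 * p.2) * I p.2) (g, h) ∂μ := rfl
    rw [h]
    exact almostRep_contParamInt μ _ ((hcont.comp (continuous_mul)).mul (hIcont.comp continuous_snd))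
  refine ⟨hcont', hdist, ?_, ?_⟩
  · intro g g'
    set J : K → A := fun k => S' g' - S (g' * k) * I k with hJ
    have hJc : Continuous J :=
      continuous_const.sub ((hcont.comp (continuous_mul_left g')).mul hIcont)
    have hJb : ∀ k, ‖J k‖ ≤ c * e + e * c := by
      intro k
      have h : J k = (S' g' - S g') + (S g' - S (g' * k) * I k) := by
        show S' g' - S (g' * k) * I k = _; abel
      rw [h]
      refine le_trans (norm_add_le _ _) (add_le_add (hdist g') ?_)
      rw [← norm_neg]
      simpa using hDi g' k
    have hJint : Integrable J μ := almostRep_contInt μ hJc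
    have hJ0 : ∫ k, J k ∂μ = 0 := by
      rw [hJ]
      rw [integral_sub (integrable_const _) (hintg g')]
      rw [almostRep_intConst, hS'def]
      exact sub_self _
    have key1 : S' g * S' g' = ∫ k, S (g * (g' * k)) * I (g' * k) * S' g' ∂μ := by
      rw [hS'def g, ← almostRep_intInv μ (fun h => S (g * h) * I h) g',
        almostRep_intMulConst μ (by
          exact almostRep_contInt μ
            ((hcont.comp (continuous_mul_left g |>.comp (continuous_mul_left g'))).mul
            (hIcont.comp (continuous_mul_left g')))) (S' g')]
    have key2 : S' (g * g') = ∫ k, S (g * g' * k) * I k ∂μ := hS'def _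
    have hptws : ∀ k, S (g * (g' * k)) * I (g' * k) * S' g' - S (g * g' * k) * I k
        = S g * J k + (S (g * (g' * k)) * I (g' * k) - S g) * J k := by
      intro k
      have h1 : (S (g * (g' * k)) * I (g' * k)) * J k
          = S (g * (g' * k)) * I (g' * k) * S' g' - S (g * g' * k) * I k := by
        rw [hJ]
        simp only [mul_sub]
        congr 1
        rw [← mul_assoc (S (g * (g' * k)) * I (g' * k)) (S (g' * k)) (I k),
          mul_assoc (S (g * (g' * k))) (I (g' * k)) (S (g' * k)), hIS, mul_one,
          ← mul_assoc g g' k]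
      rw [← h1, ← add_mul]
      congr 1
      abel
    have hXb : ∀ k, ‖S (g * (g' * k)) * I (g' * k) - S g‖ ≤ e * c := fun k => hDi g (g' * k)
    have hsum : S' g * S' g' - S' (g * g')
        = ∫ k, (S g * J k + (S (g * (g' * k)) * I (g' * k) - S g) * J k) ∂μ := by
      rw [key1, key2, ← integral_sub (by
          exact almostRep_contInt μ
            (((hcont.comp ((continuous_mul_left g).comp (continuous_mul_left g'))).mul
            (hIcont.comp (continuous_mul_left g'))).mul continuous_const))
        (by exact almostRep_contInt μ ((hcont.comp (continuous_mul_left (g * g'))).mul hIcont))]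
      congr 1
      ext k
      exact hptws k
    have hXJint : Integrable (fun k => (S (g * (g' * k)) * I (g' * k) - S g) * J k) μ := by
      exact almostRep_contInt μ
        ((((hcont.comp ((continuous_mul_left g).comp (continuous_mul_left g'))).mul
        (hIcont.comp (continuous_mul_left g'))).sub continuous_const).mul hJc)
    have hsum2 : S' g * S' g' - S' (g * g')
        = ∫ k, (S (g * (g' * k)) * I (g' * k) - S g) * J k ∂μ := by
      rw [hsum, integral_add (hJint.const_mul (S g)) hXJint,
        almostRep_constMulInt μ hJint (S g), hJ0, mul_zero, zero_add]
    rw [hsum2]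
    have hb2 : ∀ k, ‖(S (g * (g' * k)) * I (g' * k) - S g) * J k‖ ≤ 2 * c ^ 2 * e ^ 2 := by
      intro k
      refine le_trans (norm_mul_le _ _) ?_
      have h2 : ‖J k‖ ≤ c * e + e * c := hJb k
      nlinarith [norm_nonneg (J k), norm_nonneg (S (g * (g' * k)) * I (g' * k) - S g), hXb k]
    exact almostRep_normIntLe μ hb2
  · have main : ∀ g, ∃ u : Aˣ, (u : A) = S' g ∧ ‖(↑u⁻¹ : A)‖ ≤ c / (1 - c ^ 2 * e) := by
      intro g
      set x : A := I g * (S' g - S g) with hx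
      have hxb : ‖x‖ ≤ c ^ 2 * e := by
        calc ‖x‖ ≤ ‖I g‖ * ‖S' g - S g‖ := norm_mul_le _ _
          _ ≤ c * (c * e) := mul_le_mul (hIb g) (hdist g) (norm_nonneg _) hc0
          _ = c ^ 2 * e := by ring
      have hxlt : ‖-x‖ < 1 := by
        rw [norm_neg]
        calc ‖x‖ ≤ c ^ 2 * e := hxb
          _ ≤ 1 / 5 := hsmall
          _ < 1 := by norm_num
      set V : Aˣ := Units.oneSub (-x) hxlt with hV
      have hVval : (V : A) = 1 + x := by
        rw [hV, Units.val_oneSub, sub_neg_eq_add]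
      have hprod : S g * (V : A) = S' g := by
        rw [hVval, mul_add, mul_one, hx, ← mul_assoc, hSI, one_mul, add_sub_cancel]
      refine ⟨(hunit g).unit * V, ?_, ?_⟩
      · rw [Units.val_mul, (hunit g).unit_spec, hprod]
      · rw [mul_inv_rev, Units.val_mul]
        refine le_trans (norm_mul_le _ _) ?_
        have hVinv : (↑V⁻¹ : A) = ∑' n : ℕ, (-x) ^ n := rfl
        have hVb : ‖(↑V⁻¹ : A)‖ ≤ (1 - ‖x‖)⁻¹ := by
          rw [hVinv]
          have := tsum_geometric_le_of_norm_lt_one (-x) hxlt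
          rwa [norm_one, norm_neg, sub_self 1, zero_add] at this
        have hIu : (↑(hunit g).unit⁻¹ : A) = I g := by
          have h := Ring.inverse_unit (hunit g).unit
          rw [(hunit g).unit_spec] at h
          exact h.symm
        have h15 : c ^ 2 * e < 1 := lt_of_le_of_lt hsmall (by norm_num)
        have hden : (0 : ℝ) < 1 - c ^ 2 * e := by linarith
        have hmon : (1 - ‖x‖)⁻¹ ≤ (1 - c ^ 2 * e)⁻¹ := by
          apply inv_anti₀ hden
          linarith
        calc ‖(↑V⁻¹ : A)‖ * ‖(↑(hunit g).unit⁻¹ : A)‖ ≤ (1 - c ^ 2 * e)⁻¹ * c := by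
              refine mul_le_mul (le_trans hVb hmon) ?_ (norm_nonneg _) (by positivity)
              rw [hIu]; exact hIb g
          _ = c / (1 - c ^ 2 * e) := by rw [div_eq_inv_mul]
    exact ⟨fun g => (main g).elim fun u hu => hu.1 ▸ u.isUnit,
      fun g => by
        obtain ⟨u, hu1, hu2⟩ := main g
        rw [← hu1, Ring.inverse_unit]
        exact hu2⟩

end AlmostRepHelpers

/-- The sequence of (inverse-bound, defect-bound) constants. -/
noncomputable def ceSeq (c0 e0 : ℝ) : ℕ → ℝ × ℝ
  | 0 => (c0, e0)
  | n + 1 =>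
      ((ceSeq c0 e0 n).1 / (1 - (ceSeq c0 e0 n).1 ^ 2 * (ceSeq c0 e0 n).2),
        2 * (ceSeq c0 e0 n).1 ^ 2 * (ceSeq c0 e0 n).2 ^ 2)

lemma ceSeq_facts (c0 e0 : ℝ) (hc0 : 0 < c0) (he0 : 0 ≤ e0)
    (hu0 : c0 ^ 2 * e0 ≤ 16 / 81) :
    ∀ n : ℕ,
      0 < (ceSeq c0 e0 n).1 ∧ 0 ≤ (ceSeq c0 e0 n).2 ∧
      (ceSeq c0 e0 n).1 ^ 2 * (ceSeq c0 e0 n).2 ≤ (1 / 5) * (2 / 3) ^ n ∧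
      (ceSeq c0 e0 n).2 ≤ e0 * (2 / 5) ^ n ∧
      (ceSeq c0 e0 n).1 ≤ c0 / (2 / 5 + (3 / 5) * (2 / 3) ^ n) := by
  intro n
  induction n with
  | zero =>
    refine ⟨hc0, he0, ?_, ?_, ?_⟩ <;> simp [ceSeq] <;> [skip; skip] <;> linarith
  | succ n ih =>
    obtain ⟨hc, he, hu, hee, hcc⟩ := ih
    set c := (ceSeq c0 e0 n).1 with hcdef
    set e := (ceSeq c0 e0 n).2 with hedef
    have hx0 : (0:ℝ) < (2/3:ℝ) ^ n := by positivity
    have hx1 : ((2:ℝ)/3) ^ n ≤ 1 := pow_le_one₀ (by norm_num) (by norm_num)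
    have hu5 : c ^ 2 * e ≤ 1 / 5 := le_trans hu (by nlinarith)
    have hu0' : 0 ≤ c ^ 2 * e := by positivity
    have hden : (0:ℝ) < 1 - c ^ 2 * e := by linarith
    have hc' : (ceSeq c0 e0 (n+1)).1 = c / (1 - c ^ 2 * e) := rfl
    have he' : (ceSeq c0 e0 (n+1)).2 = 2 * c ^ 2 * e ^ 2 := rfl
    have hcpos' : 0 < c / (1 - c ^ 2 * e) := div_pos hc hden
    refine ⟨by rw [hc']; exact hcpos', by rw [he']; positivity, ?_, ?_, ?_⟩
    · rw [hc', he']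
      have key : (c / (1 - c ^ 2 * e)) ^ 2 * (2 * c ^ 2 * e ^ 2)
          = 2 * (c ^ 2 * e) ^ 2 / (1 - c ^ 2 * e) ^ 2 := by
        field_simp
      rw [key, div_le_iff₀ (by positivity), pow_succ ((2:ℝ)/3) n]
      have h2 : (16:ℝ)/25 ≤ (1 - c ^ 2 * e) ^ 2 := by nlinarith
      have h3 : (c ^ 2 * e) ^ 2 ≤ ((2/3:ℝ) ^ n) ^ 2 / 25 := by
        nlinarith [mul_le_mul hu hu hu0' (by positivity : (0:ℝ) ≤ (1/5) * (2/3) ^ n)]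
      have h4 : ((2/3:ℝ) ^ n) ^ 2 ≤ (2/3 : ℝ) ^ n := by nlinarith
      have h5 : (1/5 : ℝ) * ((2/3) ^ n * (2/3)) * (16/25)
          ≤ (1/5) * ((2/3) ^ n * (2/3)) * (1 - c ^ 2 * e) ^ 2 :=
        mul_le_mul_of_nonneg_left h2 (by positivity)
      linarith [h3, h4, h5, hx0.le]
    · rw [he']
      have heq : 2 * c ^ 2 * e ^ 2 = 2 * (c ^ 2 * e) * e := by ring
      rw [heq]
      calc 2 * (c ^ 2 * e) * e ≤ 2 * ((1/5) * (2/3) ^ n) * (e0 * (2/5) ^ n) := by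
            apply mul_le_mul (by nlinarith) hee he (by positivity)
        _ ≤ e0 * (2/5) ^ (n+1) := by
            rw [pow_succ]
            have : (2:ℝ) * ((1/5) * (2/3) ^ n) ≤ 2/5 := by nlinarith
            nlinarith [pow_nonneg (by norm_num : (0:ℝ) ≤ 2/5) n, he0,
              mul_nonneg he0 (pow_nonneg (by norm_num : (0:ℝ) ≤ 2/5) n)]
    · rw [hc']
      have hdn : (0:ℝ) < 2/5 + (3/5) * (2/3) ^ n := by positivity
      have hdn1 : (0:ℝ) < 2/5 + (3/5) * (2/3) ^ (n+1) := by positivity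
      have hcd : c * (2/5 + (3/5) * (2/3) ^ n) ≤ c0 := (le_div_iff₀ hdn).mp hcc
      have h7 : (2:ℝ)/5 + (3/5) * (2/3) ^ (n+1)
          ≤ (2/5 + (3/5) * (2/3) ^ n) * (1 - c ^ 2 * e) := by
        rw [pow_succ]
        nlinarith [hx1, hu, hu0', hx0.le]
      have h6 : c * ((2/5 + (3/5) * (2/3) ^ n) * (1 - c ^ 2 * e)) ≤ c0 * (1 - c ^ 2 * e) := by
        nlinarith [mul_le_mul_of_nonneg_right hcd hden.le]
      rw [div_le_div_iff₀ hden hdn1]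
      calc c * (2/5 + (3/5) * (2/3) ^ (n+1))
          ≤ c * ((2/5 + (3/5) * (2/3) ^ n) * (1 - c ^ 2 * e)) :=
            mul_le_mul_of_nonneg_left h7 hc.le
        _ ≤ c0 * (1 - c ^ 2 * e) := h6
/-- Almost representation theorem for compact groups on complex Banach spaces
(de la Harpe–Karoubi-type special case): if `T : K → L(E)` is operator-norm
continuous with `b = sup_g ‖T(g)‖` and
`r = ‖id − T(1)‖ + sup_{g,h} ‖T(gh) − T(g)∘T(h)‖ ≤ min {1/4, 1/(9·b²)}`,
then there is an operator-norm continuous representation `R` of `K` by bounded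
automorphisms of `E` with `‖R(g) − T(g)‖ ≤ 4·b·r` for all `g`. -/
theorem almost_representation_dlHK
    {K : Type*} [Group K] [TopologicalSpace K] [IsTopologicalGroup K] [T2Space K]
    [CompactSpace K]
    {E : Type*} [NormedAddCommGroup E] [NormedSpace ℂ E] [CompleteSpace E]
    (T : K → E →L[ℂ] E) (hT_cont : Continuous T)
    (b r : ℝ)
    (hb : b = ⨆ g : K, ‖T g‖)
    (hr : r = ‖(1 : E →L[ℂ] E) - T 1‖ +
        ⨆ p : K × K, ‖T (p.1 * p.2) - (T p.1).comp (T p.2)‖)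
    (h_almost : r ≤ min (1 / 4) (1 / (9 * b ^ 2))) :
    ∃ R : K → E →L[ℂ] E,
      Continuous R ∧
      R 1 = 1 ∧
      (∀ g h : K, R (g * h) = (R g).comp (R h)) ∧
      (∀ g : K, IsUnit (R g)) ∧
      ∀ g : K, ‖R g - T g‖ ≤ 4 * b * r := by
  classical
  have hb0 : 0 ≤ b := by
    rw [hb]; exact Real.iSup_nonneg fun g => norm_nonneg _
  have hdsup0 : 0 ≤ ⨆ p : K × K, ‖T (p.1 * p.2) - (T p.1).comp (T p.2)‖ :=
    Real.iSup_nonneg fun p => norm_nonneg _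
  have hr0 : 0 ≤ r := by rw [hr]; exact add_nonneg (norm_nonneg _) hdsup0
  have h4br : 0 ≤ 4 * b * r := by positivity
  rcases subsingleton_or_nontrivial E with hE | hE
  · have hall : ∀ f g : E →L[ℂ] E, f = g := fun f g =>
      ContinuousLinearMap.ext fun x => Subsingleton.elim _ _
    refine ⟨T, hT_cont, hall _ _, fun g h => hall _ _,
      fun g => (hall 1 (T g)) ▸ isUnit_one, fun g => ?_⟩
    rw [sub_self (T g)]
    simpa using h4br
  -- Main case : `E` nontrivial, so `‖1‖ = 1`.
  -- Set up the normalized Haar measure.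
  borelize K
  haveI : IsFiniteMeasure (MeasureTheory.Measure.haar : MeasureTheory.Measure K) :=
    MeasureTheory.CompactSpace.isFiniteMeasure
  have hh0 : (MeasureTheory.Measure.haar : MeasureTheory.Measure K) Set.univ ≠ 0 :=
    (isOpen_univ.measure_pos MeasureTheory.Measure.haar Set.univ_nonempty).ne'
  have hh1 : (MeasureTheory.Measure.haar : MeasureTheory.Measure K) Set.univ ≠ ⊤ :=
    MeasureTheory.measure_ne_top _ _
  set μ : MeasureTheory.Measure K :=
    ((MeasureTheory.Measure.haar : MeasureTheory.Measure K) Set.univ)⁻¹ •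
      (MeasureTheory.Measure.haar : MeasureTheory.Measure K) with hμ
  haveI : MeasureTheory.IsProbabilityMeasure μ := ⟨by
    rw [hμ]
    simp [MeasureTheory.Measure.smul_apply, smul_eq_mul, ENNReal.inv_mul_cancel hh0 hh1]⟩
  haveI : μ.IsMulLeftInvariant := by rw [hμ]; infer_instance
  -- Basic bounds coming from `b` and `r`.
  have hr' : r = ‖(1 : E →L[ℂ] E) - T 1‖ +
      ⨆ p : K × K, ‖T (p.1 * p.2) - T p.1 * T p.2‖ := hr
  have hbddT : BddAbove (Set.range fun g : K => ‖T g‖) :=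
    (isCompact_range hT_cont.norm).bddAbove
  have hble : ∀ g, ‖T g‖ ≤ b := fun g => hb ▸ le_ciSup hbddT g
  have hFcont : Continuous (fun p : K × K => ‖T (p.1 * p.2) - T p.1 * T p.2‖) :=
    ((hT_cont.comp continuous_mul).sub
      ((hT_cont.comp continuous_fst).mul (hT_cont.comp continuous_snd))).norm
  have hbddD : BddAbove (Set.range fun p : K × K => ‖T (p.1 * p.2) - T p.1 * T p.2‖) :=
    (isCompact_range hFcont).bddAbove
  have h1T : ‖(1 : E →L[ℂ] E) - T 1‖ ≤ r := by
    rw [hr']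
    have : (0:ℝ) ≤ ⨆ p : K × K, ‖T (p.1 * p.2) - T p.1 * T p.2‖ :=
      Real.iSup_nonneg fun p => norm_nonneg _
    linarith
  have hdTb : ∀ g h : K, ‖T (g * h) - T g * T h‖ ≤
      ⨆ p : K × K, ‖T (p.1 * p.2) - T p.1 * T p.2‖ := fun g h =>
    le_ciSup hbddD ((g, h) : K × K)
  have hdT : ∀ g h : K, ‖T g * T h - T (g * h)‖ ≤ r := by
    intro g h
    rw [norm_sub_rev, hr']
    have := hdTb g h
    linarith [norm_nonneg ((1 : E →L[ℂ] E) - T 1)]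
  have hr4 : r ≤ 1/4 := le_trans h_almost (by
    simpa using min_le_left (1/4 : ℝ) (1 / (9 * b ^ 2)))
  have hr1 : r < 1 := lt_of_le_of_lt hr4 (by norm_num)
  have hb34 : 3/4 ≤ b := by
    have h1 : ‖(1 : E →L[ℂ] E)‖ - ‖(1 : E →L[ℂ] E) - T 1‖ ≤ ‖T 1‖ := by
      have h2 := norm_sub_norm_le (1 : E →L[ℂ] E) ((1 : E →L[ℂ] E) - T 1)
      simpa using h2
    rw [norm_one] at h1
    linarith [hble 1, h1T]
  have hbpos : 0 < b := by linarith
  have hbr : b ^ 2 * r ≤ 1/9 := by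
    have h2 : r ≤ 1 / (9 * b ^ 2) := le_trans h_almost (min_le_right _ _)
    calc b ^ 2 * r ≤ b ^ 2 * (1 / (9 * b ^ 2)) :=
          mul_le_mul_of_nonneg_left h2 (by positivity)
      _ = 1/9 := by field_simp
  set c0 : ℝ := b / (1 - r) with hc0def
  have h1r : (0:ℝ) < 1 - r := by linarith
  have hc0pos : 0 < c0 := div_pos hbpos h1r
  have hc0le : c0 ≤ 4/3 * b := by
    rw [hc0def, div_le_iff₀ h1r]; nlinarith
  have hu0 : c0 ^ 2 * r ≤ 16/81 := by
    rw [hc0def, div_pow, div_mul_eq_mul_div, div_le_iff₀ (by positivity)]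
    nlinarith [hbr, hr4, hr0]
  -- Each `T g` is invertible with controlled inverse.
  have hxg : ∀ g : K, ‖(1 : E →L[ℂ] E) - T g * T g⁻¹‖ ≤ r := by
    intro g
    have heq : (1 : E →L[ℂ] E) - T g * T g⁻¹
        = ((1 : E →L[ℂ] E) - T 1) + (T (g * g⁻¹) - T g * T g⁻¹) := by
      rw [mul_inv_cancel g]; abel
    rw [heq, hr']
    exact le_trans (norm_add_le _ _) (add_le_add le_rfl (hdTb g g⁻¹))
  have hTu : ∀ g : K, ∃ u : (E →L[ℂ] E)ˣ, (u : E →L[ℂ] E) = T g ∧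
      ‖(↑u⁻¹ : E →L[ℂ] E)‖ ≤ c0 := by
    intro g
    have hx1 : ‖(1 : E →L[ℂ] E) - T g * T g⁻¹‖ < 1 := lt_of_le_of_lt (hxg g) hr1
    have hx2 : ‖(1 : E →L[ℂ] E) - T g⁻¹ * T g‖ < 1 := by
      have h := hxg g⁻¹
      rw [inv_inv] at h
      exact lt_of_le_of_lt h hr1
    set u1 : (E →L[ℂ] E)ˣ := Units.oneSub _ hx1 with hu1
    set u2 : (E →L[ℂ] E)ˣ := Units.oneSub _ hx2 with hu2
    have hu1v : (u1 : E →L[ℂ] E) = T g * T g⁻¹ := by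
      rw [hu1, Units.val_oneSub, sub_sub_cancel]
    have hu2v : (u2 : E →L[ℂ] E) = T g⁻¹ * T g := by
      rw [hu2, Units.val_oneSub, sub_sub_cancel]
    set v : E →L[ℂ] E := T g⁻¹ * ↑u1⁻¹ with hv
    set w : E →L[ℂ] E := ↑u2⁻¹ * T g⁻¹ with hw
    have hav : T g * v = 1 := by
      rw [hv, ← mul_assoc, ← hu1v, Units.mul_inv]
    have hwa : w * T g = 1 := by
      rw [hw, mul_assoc, ← hu2v, Units.inv_mul]
    have hwv : w = v := by
      calc w = w * (T g * v) := by rw [hav, mul_one]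
        _ = (w * T g) * v := (mul_assoc w (T g) v).symm
        _ = v := by rw [hwa, one_mul]
    refine ⟨⟨T g, v, hav, by rw [← hwv]; exact hwa⟩, rfl, ?_⟩
    show ‖v‖ ≤ c0
    have hnu1 : ‖(↑u1⁻¹ : E →L[ℂ] E)‖ ≤ (1 - r)⁻¹ := by
      have h := tsum_geometric_le_of_norm_lt_one ((1 : E →L[ℂ] E) - T g * T g⁻¹) hx1
      rw [norm_one, sub_self, zero_add] at h
      have hval : (↑u1⁻¹ : E →L[ℂ] E)
          = ∑' n : ℕ, ((1 : E →L[ℂ] E) - T g * T g⁻¹) ^ n := rfl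
      rw [hval]
      exact le_trans h (inv_anti₀ h1r (by linarith [hxg g]))
    calc ‖v‖ ≤ ‖T g⁻¹‖ * ‖(↑u1⁻¹ : E →L[ℂ] E)‖ := norm_mul_le _ _
      _ ≤ b * (1 - r)⁻¹ := mul_le_mul (hble g⁻¹) hnu1 (norm_nonneg _) hb0
      _ = c0 := by rw [hc0def, div_eq_mul_inv]
  have hT_unit : ∀ g, IsUnit (T g) := fun g => (hTu g).elim fun u hu => hu.1 ▸ u.isUnit
  have hT_inv : ∀ g, ‖Ring.inverse (T g)‖ ≤ c0 := by
    intro g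
    obtain ⟨u, h1, h2⟩ := hTu g
    rw [← h1, Ring.inverse_unit]
    exact h2
  -- The iteration.
  set Sn : ℕ → K → E →L[ℂ] E := fun n => (nextMap μ)^[n] T with hSndef
  have hS0 : Sn 0 = T := rfl
  have hSsucc : ∀ n, Sn (n+1) = nextMap μ (Sn n) := fun n =>
    Function.iterate_succ_apply' (nextMap μ) n T
  have facts := ceSeq_facts c0 r hc0pos hr0 hu0
  have hsmall : ∀ n, (ceSeq c0 r n).1 ^ 2 * (ceSeq c0 r n).2 ≤ 1/5 := by
    intro n
    have hx1 : ((2:ℝ)/3) ^ n ≤ 1 := pow_le_one₀ (by norm_num) (by norm_num)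
    have := (facts n).2.2.1
    nlinarith
  have inv : ∀ n, Continuous (Sn n) ∧ (∀ g, IsUnit (Sn n g)) ∧
      (∀ g, ‖Ring.inverse (Sn n g)‖ ≤ (ceSeq c0 r n).1) ∧
      (∀ g h, ‖Sn n g * Sn n h - Sn n (g * h)‖ ≤ (ceSeq c0 r n).2) := by
    intro n
    induction n with
    | zero => exact ⟨hT_cont, hT_unit, hT_inv, hdT⟩
    | succ n ih =>
      obtain ⟨h1, h2, h3, h4⟩ := ih
      have st := almostRep_step μ (Sn n) _ _ h1 h2 h3 h4 (facts n).2.1 (hsmall n)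
      rw [hSsucc n]
      exact ⟨st.1, st.2.2.2.1, st.2.2.2.2, st.2.2.1⟩
  have hstepd : ∀ n g, ‖Sn (n+1) g - Sn n g‖ ≤ (ceSeq c0 r n).1 * (ceSeq c0 r n).2 := by
    intro n g
    obtain ⟨h1, h2, h3, h4⟩ := inv n
    have st := almostRep_step μ (Sn n) _ _ h1 h2 h3 h4 (facts n).2.1 (hsmall n)
    rw [hSsucc n]
    exact st.2.1 g
  have hgeo : ∀ n g, ‖Sn (n+1) g - Sn n g‖ ≤ (10/3) * (b * r) * (2/5) ^ n := by
    intro n g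
    refine le_trans (hstepd n g) ?_
    obtain ⟨hcp, hep, _, hee, hcb⟩ := facts n
    have hxnn : (0:ℝ) ≤ (2/3:ℝ) ^ n := by positivity
    have hcb' : (ceSeq c0 r n).1 ≤ (5/2) * c0 := by
      refine le_trans hcb ?_
      rw [div_le_iff₀ (by positivity)]
      nlinarith [hc0pos.le]
    have h5 : (ceSeq c0 r n).1 * (ceSeq c0 r n).2 ≤ ((5/2) * c0) * (r * (2/5) ^ n) :=
      mul_le_mul hcb' hee hep (by positivity)
    refine le_trans h5 ?_
    have h6 : (0:ℝ) ≤ r * (2/5) ^ n := by positivity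
    nlinarith [mul_le_mul_of_nonneg_right hc0le h6]
  have hcau : ∀ g : K, CauchySeq (fun n => Sn n g) := by
    intro g
    apply cauchySeq_of_le_geometric (r := 2/5) (C := (10/3) * (b * r)) (by norm_num)
    intro n
    rw [dist_eq_norm, norm_sub_rev]
    exact hgeo n g
  choose Rv hRv using fun g => cauchySeq_tendsto_of_complete (hcau g)
  -- distance from `T` to `Rv`
  have hdistR : ∀ g, dist (T g) (Rv g) ≤ (32/9) * (b * r) := by
    intro g
    have hshift : Filter.Tendsto (fun n => Sn (n+1) g) Filter.atTop (nhds (Rv g)) :=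
      (hRv g).comp (Filter.tendsto_add_atTop_nat 1)
    have h1 : dist (Sn (0+1) g) (Rv g)
        ≤ ((10/3) * (b * r) * (2/5)) * (2/5) ^ 0 / (1 - 2/5) := by
      apply dist_le_of_le_geometric_of_tendsto (r := 2/5)
        (C := (10/3) * (b * r) * (2/5)) (by norm_num) ?_ hshift 0
      intro n
      rw [dist_eq_norm, norm_sub_rev]
      calc ‖Sn ((n+1)+1) g - Sn (n+1) g‖ ≤ (10/3) * (b * r) * (2/5) ^ (n+1) := hgeo (n+1) g
        _ = (10/3) * (b * r) * (2/5) * (2/5) ^ n := by ring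
    have h0 : dist (T g) (Sn 1 g) ≤ (4/3) * (b * r) := by
      rw [dist_eq_norm, norm_sub_rev, ← hS0]
      refine le_trans (hstepd 0 g) ?_
      have heq : (ceSeq c0 r 0).1 * (ceSeq c0 r 0).2 = c0 * r := rfl
      rw [heq]
      nlinarith [hc0le, hr0]
    calc dist (T g) (Rv g) ≤ dist (T g) (Sn 1 g) + dist (Sn 1 g) (Rv g) := dist_triangle _ _ _
      _ ≤ (4/3) * (b * r) + ((10/3) * (b * r) * (2/5)) * (2/5) ^ 0 / (1 - 2/5) :=
          add_le_add h0 h1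
      _ = (32/9) * (b * r) := by ring
  -- multiplicativity in the limit
  have hmul : ∀ g h : K, Rv (g * h) = Rv g * Rv h := by
    intro g h
    have h1 : Filter.Tendsto (fun n => Sn n g * Sn n h - Sn n (g * h)) Filter.atTop
        (nhds (Rv g * Rv h - Rv (g * h))) :=
      ((hRv g).mul (hRv h)).sub (hRv (g * h))
    have h3 : Filter.Tendsto (fun n : ℕ => r * (2/5) ^ n) Filter.atTop (nhds 0) := by
      simpa using
        (tendsto_pow_atTop_nhds_zero_of_lt_one (by norm_num : (0:ℝ) ≤ 2/5)
          (by norm_num)).const_mul r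
    have h4 : ‖Rv g * Rv h - Rv (g * h)‖ ≤ 0 := by
      refine le_of_tendsto_of_tendsto' h1.norm h3 fun n => ?_
      exact le_trans ((inv n).2.2.2 g h) (facts n).2.2.2.1
    have h5 : Rv g * Rv h - Rv (g * h) = 0 := norm_le_zero_iff.mp h4
    have := sub_eq_zero.mp h5
    exact this.symm
  -- R(1) = 1
  have hbrle : b * r ≤ 4/27 := by nlinarith [hbr, hb34, mul_nonneg hb0 hr0]
  have hR1 : Rv 1 = 1 := by
    have hid : Rv 1 * Rv 1 = Rv 1 := by rw [← hmul 1 1, one_mul]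
    have hnear : ‖(1 : E →L[ℂ] E) - Rv 1‖ < 1 := by
      have heq : (1 : E →L[ℂ] E) - Rv 1 = ((1 : E →L[ℂ] E) - T 1) + (T 1 - Rv 1) := by abel
      rw [heq]
      refine lt_of_le_of_lt (norm_add_le _ _) ?_
      have h2 : ‖T 1 - Rv 1‖ ≤ (32/9) * (b * r) := by
        rw [← dist_eq_norm]; exact hdistR 1
      have : (32/9 : ℝ) * (b * r) ≤ (32/9) * (4/27) := by nlinarith
      calc ‖(1 : E →L[ℂ] E) - T 1‖ + ‖T 1 - Rv 1‖ ≤ r + (32/9) * (4/27) := by linarith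
        _ < 1 := by linarith
    have hunit1 : IsUnit (Rv 1) := by
      have h := isUnit_one_sub_of_norm_lt_one hnear
      rwa [sub_sub_cancel] at h
    exact hunit1.mul_left_cancel (by rw [hid, mul_one])
  have hRunit : ∀ g : K, IsUnit (Rv g) := by
    intro g
    refine ⟨⟨Rv g, Rv g⁻¹, ?_, ?_⟩, rfl⟩
    · rw [← hmul g g⁻¹, mul_inv_cancel g, hR1]
    · rw [← hmul g⁻¹ g, inv_mul_cancel g, hR1]
  -- continuity of the limit
  have hRcont : Continuous Rv := by
    have hunif : TendstoUniformly (fun n g => Sn n g) Rv Filter.atTop := by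
      rw [Metric.tendstoUniformly_iff]
      intro ε hε
      have hconv : Filter.Tendsto
          (fun n : ℕ => (10/3) * (b * r) * (2/5) ^ n / (1 - 2/5)) Filter.atTop (nhds 0) := by
        have h := (tendsto_pow_atTop_nhds_zero_of_lt_one (by norm_num : (0:ℝ) ≤ 2/5)
          (by norm_num)).const_mul ((10/3) * (b * r))
        simpa using h.div_const (1 - 2/5)
      filter_upwards [hconv.eventually_lt_const hε] with n hn g
      have hle : dist (Sn n g) (Rv g) ≤ (10/3) * (b * r) * (2/5) ^ n / (1 - 2/5) := by
        apply dist_le_of_le_geometric_of_tendsto (r := 2/5) (C := (10/3) * (b * r))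
          (by norm_num) ?_ (hRv g) n
        intro m
        rw [dist_eq_norm, norm_sub_rev]
        exact hgeo m g
      calc dist (Rv g) (Sn n g) = dist (Sn n g) (Rv g) := dist_comm _ _
        _ ≤ (10/3) * (b * r) * (2/5) ^ n / (1 - 2/5) := hle
        _ < ε := hn
    exact hunif.continuous (Filter.Eventually.of_forall fun n => (inv n).1).frequently
  refine ⟨Rv, hRcont, hR1, fun g h => hmul g h, hRunit, fun g => ?_⟩
  have h1 : ‖Rv g - T g‖ = dist (T g) (Rv g) := by
    rw [dist_eq_norm, norm_sub_rev]
  rw [h1]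
  refine le_trans (hdistR g) ?_
  nlinarith [mul_nonneg hb0 hr0]
end

section
/- Normalization of multipliers to isometric ones (compact group case of the paper's multiplier lemma): suppose K is compact, and let σ be an A-valued multiplier for K satisfying ‖σ(g,h)⁻¹‖ = 1/‖σ(g,h)‖ for all g,h ∈ K. Then there exists a continuous function ρ : K → ℝ with ρ(g) > 0 for all g such that the A-valued multiplier σ̃ defined by σ̃(g,h) = (ρ(g)·ρ(h)/ρ(gh))·σ(g,h) is isometric: ‖σ̃(g,h)‖ = 1 and ‖σ̃(g,h)⁻¹‖ = 1 for all g,h ∈ K. -/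
open MeasureTheory


/-- Normalization of multipliers to isometric ones (compact group case):
if `σ` is an `A`-valued multiplier for a compact Hausdorff group `K` with
`‖σ(g,h)⁻¹‖ = 1/‖σ(g,h)‖`, then there is a continuous positive function
`ρ : K → ℝ` such that `σ̃(g,h) = (ρ(g)·ρ(h)/ρ(gh))·σ(g,h)` is isometric:
`‖σ̃(g,h)‖ = 1` and `‖σ̃(g,h)⁻¹‖ = 1`. -/
theorem multiplier_normalization
    {K A : Type*} [Group K] [TopologicalSpace K] [IsTopologicalGroup K] [T2Space K]
    [CompactSpace K]
    -- `A` is a unital real Banach algebra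
    [NormedRing A] [NormedAlgebra ℝ A] [CompleteSpace A] [NormOneClass A]
    -- the action of `K` on `A` by unital isometric algebra automorphisms
    (act : K → A → A)
    (hact_one : ∀ a, act 1 a = a)
    (hact_mul : ∀ g h a, act (g * h) a = act g (act h a))
    (hact_add : ∀ g a b, act g (a + b) = act g a + act g b)
    (hact_mul' : ∀ g a b, act g (a * b) = act g a * act g b)
    (hact_smul : ∀ g (r : ℝ) (a : A), act g (r • a) = r • act g a)
    (hact_unital : ∀ g, act g 1 = 1)
    (hact_isom : ∀ g a, ‖act g a‖ = ‖a‖)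
    (hact_cont : Continuous fun p : K × A => act p.1 p.2)
    -- `σ` is an `A`-valued multiplier for `K`
    (σ : K → K → A)
    (hσ_cont : Continuous fun p : K × K => σ p.1 p.2)
    (hσ_unit : ∀ g h, IsUnit (σ g h))
    (hσ_central : ∀ g h a, σ g h * a = a * σ g h)
    (hσ_normal₁ : ∀ h, σ 1 h = 1)
    (hσ_normal₂ : ∀ g, σ g 1 = 1)
    (hσ_cocycle : ∀ g h k, σ g h * σ (g * h) k = act g (σ h k) * σ g (h * k))
    -- `‖σ(g,h)⁻¹‖ = 1/‖σ(g,h)‖`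
    (hσ_norm : ∀ g h, ‖Ring.inverse (σ g h)‖ = 1 / ‖σ g h‖) :
    ∃ ρ : K → ℝ,
      Continuous ρ ∧ (∀ g, 0 < ρ g) ∧
      ∀ g h : K,
        ‖(ρ g * ρ h / ρ (g * h)) • σ g h‖ = 1 ∧
        ‖Ring.inverse ((ρ g * ρ h / ρ (g * h)) • σ g h)‖ = 1 := by
  classical
  -- A is nontrivial
  have hone : (1 : A) ≠ 0 := by
    intro h
    have : ‖(1 : A)‖ = 1 := norm_one
    rw [h, norm_zero] at this
    exact zero_ne_one this
  -- positivity of norms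
  have npos : ∀ g h, 0 < ‖σ g h‖ := by
    intro g h
    have hinv : Ring.inverse (σ g h) ≠ 0 := by
      intro h0
      have := Ring.mul_inverse_cancel _ (hσ_unit g h)
      rw [h0, mul_zero] at this
      exact hone this.symm
    have h1 : 0 < ‖Ring.inverse (σ g h)‖ := norm_pos_iff.mpr hinv
    rw [hσ_norm] at h1
    exact one_div_pos.mp h1
  -- multiplicativity of norms against σ's
  have nmul : ∀ (a b : A), IsUnit a → ‖Ring.inverse a‖ = 1 / ‖a‖ → 0 < ‖a‖ →
      ‖a * b‖ = ‖a‖ * ‖b‖ := by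
    intro a b ha hna hap
    refine le_antisymm (norm_mul_le _ _) ?_
    have h1 : b = Ring.inverse a * (a * b) := by
      rw [← mul_assoc, Ring.inverse_mul_cancel _ ha, one_mul]
    have h2 : ‖b‖ ≤ ‖Ring.inverse a‖ * ‖a * b‖ := by
      conv_lhs => rw [h1]
      exact norm_mul_le _ _
    rw [hna] at h2
    calc ‖a‖ * ‖b‖ ≤ ‖a‖ * (1 / ‖a‖ * ‖a * b‖) := by
          exact mul_le_mul_of_nonneg_left h2 (le_of_lt hap)
      _ = ‖a * b‖ := by field_simp
  -- Ring.inverse of act g (σ h k)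
  have act_inv : ∀ g h k, Ring.inverse (act g (σ h k)) = act g (Ring.inverse (σ h k)) := by
    intro g h k
    set u : Aˣ := ⟨act g (σ h k), act g (Ring.inverse (σ h k)), by
      rw [← hact_mul' g, Ring.mul_inverse_cancel _ (hσ_unit h k), hact_unital], by
      rw [← hact_mul' g, Ring.inverse_mul_cancel _ (hσ_unit h k), hact_unital]⟩ with hu
    have : Ring.inverse (u : A) = ↑u⁻¹ := Ring.inverse_unit u
    simpa [hu] using this
  have act_norm : ∀ g h k, ‖Ring.inverse (act g (σ h k))‖ = 1 / ‖act g (σ h k)‖ := by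
    intro g h k
    rw [act_inv, hact_isom, hact_isom, hσ_norm]
  have act_unit : ∀ g h k, IsUnit (act g (σ h k)) := by
    intro g h k
    exact ⟨⟨act g (σ h k), act g (Ring.inverse (σ h k)), by
      rw [← hact_mul' g, Ring.mul_inverse_cancel _ (hσ_unit h k), hact_unital], by
      rw [← hact_mul' g, Ring.inverse_mul_cancel _ (hσ_unit h k), hact_unital]⟩, rfl⟩
  -- log cocycle
  have logcoc : ∀ g h k : K,
      Real.log ‖σ g h‖ + Real.log ‖σ (g * h) k‖
        = Real.log ‖σ h k‖ + Real.log ‖σ g (h * k)‖ := by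
    intro g h k
    have e1 : ‖σ g h‖ * ‖σ (g * h) k‖ = ‖σ g h * σ (g * h) k‖ :=
      (nmul _ _ (hσ_unit g h) (hσ_norm g h) (npos g h)).symm
    have e2 : ‖act g (σ h k) * σ g (h * k)‖ = ‖act g (σ h k)‖ * ‖σ g (h * k)‖ :=
      nmul _ _ (act_unit g h k) (act_norm g h k) (by rw [hact_isom]; exact npos h k)
    have e : ‖σ g h‖ * ‖σ (g * h) k‖ = ‖σ h k‖ * ‖σ g (h * k)‖ := by
      rw [e1, hσ_cocycle, e2, hact_isom]
    have := congrArg Real.log e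
    rwa [Real.log_mul (ne_of_gt (npos g h)) (ne_of_gt (npos (g*h) k)),
      Real.log_mul (ne_of_gt (npos h k)) (ne_of_gt (npos g (h*k)))] at this
  -- Haar measure setup
  letI : MeasurableSpace K := borel K
  haveI : BorelSpace K := ⟨rfl⟩
  haveI : Nonempty K := ⟨1⟩
  set μ : Measure K := Measure.haarMeasure (⊤ : TopologicalSpace.PositiveCompacts K) with hμ
  haveI : IsProbabilityMeasure μ := by
    constructor
    rw [hμ]
    have := Measure.haarMeasure_self (K₀ := (⊤ : TopologicalSpace.PositiveCompacts K))
    rwa [TopologicalSpace.PositiveCompacts.coe_top] at this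
  -- the log function is continuous
  have fcont : Continuous (fun p : K × K => Real.log ‖σ p.1 p.2‖) := by
    apply Continuous.log hσ_cont.norm
    intro p
    exact ne_of_gt (npos p.1 p.2)
  have fint : ∀ g : K, Integrable (fun k => Real.log ‖σ g k‖) μ := by
    intro g
    apply Continuous.integrable_of_hasCompactSupport
    · exact fcont.comp (Continuous.prodMk_right g)
    · exact IsClosed.isCompact (isClosed_tsupport _)
  set b : K → ℝ := fun g => ∫ k, Real.log ‖σ g k‖ ∂μ with hb
  -- key identity: log ‖σ g h‖ = b g + b h - b (g*h)
  have key : ∀ g h : K, Real.log ‖σ g h‖ = b g + b h - b (g * h) := by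
    intro g h
    have e : ∀ k : K, Real.log ‖σ g h‖ + Real.log ‖σ (g * h) k‖
        = Real.log ‖σ h k‖ + Real.log ‖σ g (h * k)‖ := logcoc g h
    have hi : (∫ k, (Real.log ‖σ g h‖ + Real.log ‖σ (g * h) k‖) ∂μ)
        = ∫ k, (Real.log ‖σ h k‖ + Real.log ‖σ g (h * k)‖) ∂μ := by
      congr 1
      ext k
      exact e k
    have hint3 : Integrable (fun k => Real.log ‖σ g (h * k)‖) μ := by
      apply Continuous.integrable_of_hasCompactSupport
      · exact (fcont.comp (Continuous.prodMk_right g)).comp (continuous_mul_left h)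
      · exact IsClosed.isCompact (isClosed_tsupport _)
    rw [integral_add (integrable_const _) (fint (g*h)),
        integral_add (fint h) hint3, integral_const] at hi
    have hinv : (∫ k, Real.log ‖σ g (h * k)‖ ∂μ) = b g := by
      rw [hb]
      exact integral_mul_left_eq_self (fun k => Real.log ‖σ g k‖) h
    simp only [measure_univ, probReal_univ, ENNReal.toReal_one, one_smul] at hi
    rw [hinv] at hi
    have : Real.log ‖σ g h‖ = b h + b g - b (g * h) := by
      rw [hb] at hi ⊢
      linarith
    linarith
  -- continuity of b
  have bcont : Continuous b := by
    rw [continuous_iff_continuousAt]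
    intro g₀
    rw [ContinuousAt, Metric.tendsto_nhds]
    intro ε hε
    have hev : ∀ᶠ g in nhds g₀, ∀ k ∈ (Set.univ : Set K),
        |Real.log ‖σ g k‖ - Real.log ‖σ g₀ k‖| < ε / 2 := by
      apply isCompact_univ.eventually_forall_of_forall_eventually
      intro k _
      have hc : Continuous fun z : K × K => |Real.log ‖σ z.1 z.2‖ - Real.log ‖σ g₀ z.2‖| :=
        (fcont.sub (fcont.comp (continuous_const.prodMk continuous_snd))).abs
      have h0 : Filter.Tendsto (fun z : K × K => |Real.log ‖σ z.1 z.2‖ - Real.log ‖σ g₀ z.2‖|)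
          (nhds (g₀, k)) (nhds 0) := by
        have := hc.tendsto (g₀, k)
        simpa using this
      exact h0.eventually_lt_const (by linarith)
    filter_upwards [hev] with g hg
    have h1 : b g - b g₀ = ∫ k, (Real.log ‖σ g k‖ - Real.log ‖σ g₀ k‖) ∂μ := by
      rw [hb]
      simp only
      rw [integral_sub (fint g) (fint g₀)]
    have h2 : ‖∫ k, (Real.log ‖σ g k‖ - Real.log ‖σ g₀ k‖) ∂μ‖ ≤ ∫ _k, (ε / 2) ∂μ := by
      apply norm_integral_le_of_norm_le (integrable_const (ε / 2))
      filter_upwards with k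
      rw [Real.norm_eq_abs]
      exact le_of_lt (hg k (Set.mem_univ k))
    rw [integral_const] at h2
    simp only [measure_univ, probReal_univ, ENNReal.toReal_one, one_smul, smul_eq_mul, one_mul] at h2
    rw [← h1, Real.norm_eq_abs] at h2
    rw [Real.dist_eq]
    calc |b g - b g₀| ≤ ε / 2 := h2
      _ < ε := by linarith
  refine ⟨fun g => Real.exp (-(b g)), (bcont.neg).rexp, fun g => Real.exp_pos _, ?_⟩
  intro g h
  have hc : Real.exp (-(b g)) * Real.exp (-(b h)) / Real.exp (-(b (g * h)))
      = (‖σ g h‖)⁻¹ := by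
    rw [← Real.exp_add, ← Real.exp_sub]
    have : -(b g) + -(b h) - -(b (g * h)) = -(Real.log ‖σ g h‖) := by
      rw [key g h]; ring
    rw [this, Real.exp_neg, Real.exp_log (npos g h)]
  rw [hc]
  have hc0 : (0:ℝ) < (‖σ g h‖)⁻¹ := inv_pos.mpr (npos g h)
  constructor
  · rw [norm_smul, Real.norm_eq_abs, abs_of_pos hc0]
    exact inv_mul_cancel₀ (ne_of_gt (npos g h))
  · -- compute Ring.inverse of the scaled element
    set c : ℝ := (‖σ g h‖)⁻¹ with hcdef
    set u : Aˣ := ⟨c • σ g h, c⁻¹ • Ring.inverse (σ g h), by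
      rw [smul_mul_smul_comm, Ring.mul_inverse_cancel _ (hσ_unit g h),
        mul_inv_cancel₀ (ne_of_gt hc0), one_smul], by
      rw [smul_mul_smul_comm, Ring.inverse_mul_cancel _ (hσ_unit g h),
        inv_mul_cancel₀ (ne_of_gt hc0), one_smul]⟩ with hu
    have : Ring.inverse (c • σ g h) = c⁻¹ • Ring.inverse (σ g h) := by
      have := Ring.inverse_unit u
      simpa [hu] using this
    rw [this, norm_smul, Real.norm_eq_abs, hσ_norm, hcdef]
    rw [abs_of_pos (inv_pos.mpr hc0), hcdef, inv_inv, one_div, mul_inv_cancel₀ (ne_of_gt (npos g h))]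
end

section
/- A proper transitive action on a locally compact Hausdorff space has open orbit maps (group case of the paper's claim that a proper transitive locally compact groupoid is locally transitive): let G be a topological group acting continuously on a locally compact Hausdorff space X; assume the action is proper (the map G × X → X × X, (g,x) ↦ (g•x, x), is a proper map) and transitive (for all x,y ∈ X there is g ∈ G with g•x = y). Then for every y ∈ X the orbit map G → X, g ↦ g•y, is an open map; equivalently, it is a topological quotient map, so the continuous bijection G/Stab(y) → X is a homeomorphism. -/
/-- A proper transitive continuous action of a topological group `G` on a locally
compact Hausdorff space `X` has open orbit maps `g ↦ g • y`. -/
theorem proper_transitive_action_isOpenMap_orbitMap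
    {G X : Type*} [Group G] [TopologicalSpace G] [IsTopologicalGroup G]
    [TopologicalSpace X] [LocallyCompactSpace X] [T2Space X]
    [MulAction G X] [ContinuousSMul G X]
    (hproper : IsProperMap fun p : G × X => (p.1 • p.2, p.2))
    (htrans : ∀ x y : X, ∃ g : G, g • x = y) :
    ∀ y : X, IsOpenMap fun g : G => g • y := by
  intro y
  set q : G → X := fun g => g • y with hq
  have hcont : Continuous q := continuous_id.smul continuous_const
  -- the map g ↦ (g•y, y) is proper, as composition of a closed embedding with hproper
  have hemb : Topology.IsClosedEmbedding (fun g : G => ((g, y) : G × X)) := by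
    refine ⟨(Homeomorph.prodComm X G).isEmbedding.comp (isEmbedding_prodMkRight y), ?_⟩
    have : Set.range (fun g : G => ((g, y) : G × X)) = {p : G × X | p.2 = y} := by
      ext p; simp [Prod.ext_iff, eq_comm]
    rw [this]
    exact isClosed_singleton.preimage continuous_snd
  have h1 : IsProperMap (fun g : G => ((g • y, y) : X × X)) :=
    hproper.comp hemb.isProperMap
  -- hence q is proper: compact preimages
  have hqproper : IsProperMap q := by
    rw [isProperMap_iff_isCompact_preimage]
    refine ⟨hcont, fun K hK => ?_⟩
    have : q ⁻¹' K = (fun g : G => ((g • y, y) : X × X)) ⁻¹' (K ×ˢ {y}) := by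
      ext g; simp [q]
    rw [this]
    exact h1.isCompact_preimage (hK.prod isCompact_singleton)
  have hsurj : Function.Surjective q := fun x => htrans y x
  have hquot : Topology.IsQuotientMap q := hqproper.isClosedMap.isQuotientMap hcont hsurj
  intro U hU
  rw [← hquot.isOpen_preimage]
  have : q ⁻¹' (q '' U) = ⋃ s ∈ MulAction.stabilizer G y, (fun g => g * s) '' U := by
    ext g
    simp only [Set.mem_preimage, Set.mem_image, Set.mem_iUnion]
    constructor
    · rintro ⟨u, hu, huv⟩
      refine ⟨u⁻¹ * g, ?_, u, hu, by group⟩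
      simp only [q] at huv
      simp [mul_smul, ← huv]
    · rintro ⟨s, hs, u, hu, rfl⟩
      rw [MulAction.mem_stabilizer_iff] at hs
      exact ⟨u, hu, by simp [q, mul_smul, hs]⟩
  rw [this]
  exact isOpen_biUnion fun s _ => (Homeomorph.mulRight s).isOpenMap U hU
end
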